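/- arXiv:2605.10080 — 8 statements merged into one kernel-verified Lean document; each statement's English description precedes it below -/
import Mathlib

section
/- Let Ω ⊆ ℝⁿ be a nonempty closed convex set. For any x, z ∈ Ω and any ξ ∈ ℝⁿ, if q is the Euclidean projection of ξ onto the tangent cone T_Ω(x), then ⟨x − z, q⟩ ≤ ⟨x − z, ξ⟩. -/
open Matrix

/-- Euclidean norm on `Fin k → ℝ`. -/
noncomputable def eNorm {k : ℕ} (x : Fin k → ℝ) : ℝ := Real.sqrt (x ⬝ᵥ x)

/-- Tangent cone of `S` at `x`: closure of `{α • (z - x) : α ≥ 0, z ∈ S}`. -/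
def tangentConeOf {k : ℕ} (S : Set (Fin k → ℝ)) (x : Fin k → ℝ) : Set (Fin k → ℝ) :=
  closure {y | ∃ α : ℝ, 0 ≤ α ∧ ∃ z ∈ S, y = α • (z - x)}

/-- `q` is the Euclidean projection of `y` onto `K`. -/
def IsEuclideanProj {k : ℕ} (K : Set (Fin k → ℝ)) (y q : Fin k → ℝ) : Prop :=
  q ∈ K ∧ ∀ w ∈ K, eNorm (y - q) ≤ eNorm (y - w)

lemma dot_expand {n : ℕ} (u v : Fin n → ℝ) (t : ℝ) :
    (u - t • v) ⬝ᵥ (u - t • v) = u ⬝ᵥ u - 2 * t * (u ⬝ᵥ v) + t ^ 2 * (v ⬝ᵥ v) := by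
  have h : ∀ i, (u i - t * v i) * (u i - t * v i)
      = u i * u i - 2 * t * (u i * v i) + t ^ 2 * (v i * v i) := fun i => by ring
  simp only [dotProduct, Pi.sub_apply, Pi.smul_apply, smul_eq_mul]
  rw [Finset.sum_congr rfl (fun i _ => h i), Finset.sum_add_distrib,
    Finset.sum_sub_distrib, Finset.mul_sum, Finset.mul_sum]

theorem stmt1 {n : ℕ} (Ω : Set (Fin n → ℝ)) (hne : Ω.Nonempty) (hcl : IsClosed Ω)
    (hconv : Convex ℝ Ω) (x z : Fin n → ℝ) (hx : x ∈ Ω) (hz : z ∈ Ω)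
    (ξ q : Fin n → ℝ) (hq : IsEuclideanProj (tangentConeOf Ω x) ξ q) :
    (x - z) ⬝ᵥ q ≤ (x - z) ⬝ᵥ ξ := by
  obtain ⟨hqK, hmin⟩ := hq
  set S0 : Set (Fin n → ℝ) := {y | ∃ α : ℝ, 0 ≤ α ∧ ∃ w ∈ Ω, y = α • (w - x)} with hS0
  have hKdef : tangentConeOf Ω x = closure S0 := rfl
  -- S0 is convex
  have hS0conv : Convex ℝ S0 := by
    rintro u ⟨α, hα, zu, hzu, rfl⟩ v ⟨β, hβ, zv, hzv, rfl⟩ s t hs ht hst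
    set γ : ℝ := s*α + t*β with hγ
    have hγ0 : 0 ≤ γ := by positivity
    rcases eq_or_lt_of_le hγ0 with h0 | h0
    · have hsa : s*α = 0 := by nlinarith [mul_nonneg hs hα, mul_nonneg ht hβ]
      have htb : t*β = 0 := by nlinarith [mul_nonneg hs hα, mul_nonneg ht hβ]
      refine ⟨0, le_refl 0, z, hz, ?_⟩
      funext i
      simp only [Pi.add_apply, Pi.smul_apply, Pi.sub_apply, smul_eq_mul]
      have h1 : s*(α*(zu i - x i)) + t*(β*(zv i - x i))
          = (s*α)*(zu i - x i) + (t*β)*(zv i - x i) := by ring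
      rw [h1, hsa, htb]; ring
    · refine ⟨γ, hγ0, (s*α/γ) • zu + (t*β/γ) • zv, ?_, ?_⟩
      · apply hconv hzu hzv
        · positivity
        · positivity
        · field_simp; exact hγ.symm
      · funext i
        simp only [Pi.add_apply, Pi.smul_apply, Pi.sub_apply, smul_eq_mul]
        field_simp
        ring
  have hKconv : Convex ℝ (closure S0) := hS0conv.closure
  -- closure S0 is closed under nonneg scaling
  have hsmul : ∀ c : ℝ, 0 ≤ c → ∀ v ∈ closure S0, c • v ∈ closure S0 := by
    intro c hc v hv
    have hmaps : Set.MapsTo (fun y : Fin n → ℝ => c • y) S0 S0 := by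
      rintro y ⟨α, hα, w, hw, rfl⟩
      exact ⟨c*α, by positivity, w, hw, by rw [mul_smul]⟩
    exact hmaps.closure (continuous_const_smul c) hv
  have hzx : z - x ∈ closure S0 := subset_closure ⟨1, zero_le_one, z, hz, by simp⟩
  have hwK : q + (z - x) ∈ closure S0 := by
    have hmid : (1/2 : ℝ) • q + (1/2 : ℝ) • (z - x) ∈ closure S0 :=
      hKconv (hKdef ▸ hqK) hzx (by norm_num) (by norm_num) (by norm_num)
    have h2 := hsmul 2 (by norm_num) _ hmid
    have : (2:ℝ) • ((1/2 : ℝ) • q + (1/2 : ℝ) • (z - x)) = q + (z - x) := by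
      rw [smul_add, smul_smul, smul_smul]; norm_num
    rwa [this] at h2
  -- variational inequality with w = q + (z - x)
  set a : ℝ := (ξ - q) ⬝ᵥ (z - x) with ha
  set b : ℝ := (z - x) ⬝ᵥ (z - x) with hb
  have hbnn : 0 ≤ b := by
    apply Finset.sum_nonneg
    intro i _
    exact mul_self_nonneg _
  have key : ∀ t : ℝ, 0 < t → t ≤ 1 → 2 * a ≤ t * b := by
    intro t ht ht1
    have hwt : (1 - t) • q + t • (q + (z - x)) ∈ closure S0 :=
      hKconv (hKdef ▸ hqK) hwK (by linarith) (le_of_lt ht) (by ring)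
    have hle := hmin _ (hKdef ▸ hwt)
    have hsq : (ξ - q) ⬝ᵥ (ξ - q) ≤
        (ξ - ((1 - t) • q + t • (q + (z - x)))) ⬝ᵥ (ξ - ((1 - t) • q + t • (q + (z - x)))) := by
      simp only [eNorm] at hle
      have h1 : 0 ≤ (ξ - q) ⬝ᵥ (ξ - q) := Finset.sum_nonneg fun i _ => mul_self_nonneg _
      nlinarith [Real.sq_sqrt h1, Real.sqrt_nonneg ((ξ - ((1 - t) • q + t • (q + (z - x)))) ⬝ᵥ (ξ - ((1 - t) • q + t • (q + (z - x))))), Real.sq_sqrt (show 0 ≤ (ξ - ((1 - t) • q + t • (q + (z - x)))) ⬝ᵥ (ξ - ((1 - t) • q + t • (q + (z - x)))) from Finset.sum_nonneg fun i _ => mul_self_nonneg _), hle, Real.sqrt_nonneg ((ξ - q) ⬝ᵥ (ξ - q))]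
    have hexp : (ξ - ((1 - t) • q + t • (q + (z - x)))) ⬝ᵥ (ξ - ((1 - t) • q + t • (q + (z - x))))
        = (ξ - q) ⬝ᵥ (ξ - q) - 2 * t * a + t^2 * b := by
      have hpt : ξ - ((1 - t) • q + t • (q + (z - x))) = (ξ - q) - t • (z - x) := by
        funext i
        simp only [Pi.sub_apply, Pi.add_apply, Pi.smul_apply, smul_eq_mul]
        ring
      rw [hpt, ha, hb]
      exact dot_expand (ξ - q) (z - x) t
    rw [hexp] at hsq
    nlinarith
  have hale : a ≤ 0 := by
    by_contra hpos
    push_neg at hpos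
    rcases eq_or_lt_of_le hbnn with hb0 | hb0
    · have := key 1 one_pos le_rfl
      nlinarith
    · have ht : 0 < min 1 (a / b) := lt_min one_pos (div_pos hpos hb0)
      have := key _ ht (min_le_left _ _)
      have h2 : min 1 (a / b) * b ≤ (a / b) * b := by
        apply mul_le_mul_of_nonneg_right (min_le_right _ _) hbnn
      rw [div_mul_cancel₀ _ (ne_of_gt hb0)] at h2
      linarith
  have : (x - z) ⬝ᵥ ξ - (x - z) ⬝ᵥ q = -a := by
    rw [ha]
    simp only [sub_dotProduct, dotProduct_sub]
    rw [dotProduct_comm x ξ, dotProduct_comm z ξ,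
      dotProduct_comm x q, dotProduct_comm z q]
    ring
  linarith
end

section
/- Let Ω ⊆ ℝⁿ be a nonempty closed convex set, let x, z ∈ Ω, and let ξ, ξ* ∈ ℝⁿ be such that ⟨ξ*, w − z⟩ ≤ 0 for all w ∈ Ω (i.e., ξ* lies in the normal cone of Ω at z). If q is the Euclidean projection of ξ onto the tangent cone T_Ω(x), then ⟨x − z, q⟩ ≤ ⟨x − z, ξ − ξ*⟩. -/
open Matrix

lemma dot_self_nonneg {k : ℕ} (x : Fin k → ℝ) : 0 ≤ x ⬝ᵥ x :=
  Finset.sum_nonneg fun i _ => mul_self_nonneg _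

theorem stmt2 {n : ℕ} (Ω : Set (Fin n → ℝ)) (hne : Ω.Nonempty) (hcl : IsClosed Ω)
    (hconv : Convex ℝ Ω) (x z : Fin n → ℝ) (hx : x ∈ Ω) (hz : z ∈ Ω)
    (ξ ξstar q : Fin n → ℝ)
    (hnc : ∀ w ∈ Ω, ξstar ⬝ᵥ (w - z) ≤ 0)
    (hq : IsEuclideanProj (tangentConeOf Ω x) ξ q) :
    (x - z) ⬝ᵥ q ≤ (x - z) ⬝ᵥ (ξ - ξstar) := by
  set v : Fin n → ℝ := z - x with hv
  set C : Set (Fin n → ℝ) := {y | ∃ α : ℝ, 0 ≤ α ∧ ∃ w ∈ Ω, y = α • (w - x)} with hC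
  -- membership: q + t • v ∈ tangent cone for t > 0
  have hmem : ∀ t : ℝ, 0 < t → q + t • v ∈ tangentConeOf Ω x := by
    intro t ht
    have hmaps : Set.MapsTo (fun y => y + t • v) C C := by
      rintro y ⟨α, hα, w, hw, rfl⟩
      refine ⟨α + t, by linarith, (α/(α+t)) • w + (t/(α+t)) • z, ?_, ?_⟩
      · exact hconv hw hz (by positivity) (by positivity)
          (by field_simp)
      · have hαt : α + t ≠ 0 := by positivity
        match_scalars <;> (field_simp; try ring)
    have hcont : Continuous (fun y : Fin n → ℝ => y + t • v) := by continuity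
    have hq1 : q ∈ closure C := hq.1
    exact map_mem_closure (f := fun y => y + t • v) hcont hq1 hmaps
  -- variational inequality
  have hc : 0 ≤ v ⬝ᵥ v := dot_self_nonneg v
  have hkey : ∀ t : ℝ, 0 < t → 2 * t * ((ξ - q) ⬝ᵥ v) ≤ t^2 * (v ⬝ᵥ v) := by
    intro t ht
    have h1 := hq.2 _ (hmem t ht)
    have hA : 0 ≤ (ξ - q) ⬝ᵥ (ξ - q) := dot_self_nonneg _
    have hB : 0 ≤ (ξ - (q + t • v)) ⬝ᵥ (ξ - (q + t • v)) := dot_self_nonneg _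
    have h2 : (ξ - q) ⬝ᵥ (ξ - q) ≤ (ξ - (q + t • v)) ⬝ᵥ (ξ - (q + t • v)) := by
      unfold eNorm at h1
      nlinarith [Real.sq_sqrt hA, Real.sq_sqrt hB, Real.sqrt_nonneg ((ξ - q) ⬝ᵥ (ξ - q)),
        Real.sqrt_nonneg ((ξ - (q + t • v)) ⬝ᵥ (ξ - (q + t • v)))]
    have hexp : (ξ - (q + t • v)) ⬝ᵥ (ξ - (q + t • v))
        = (ξ - q) ⬝ᵥ (ξ - q) - 2 * t * ((ξ - q) ⬝ᵥ v) + t^2 * (v ⬝ᵥ v) := by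
      simp [dotProduct_sub, sub_dotProduct, dotProduct_smul, smul_dotProduct, dotProduct_add,
        add_dotProduct, dotProduct_comm ξ q, dotProduct_comm ξ v, dotProduct_comm q v]
      ring
    linarith [h2, hexp ▸ h2]
  have ha : (ξ - q) ⬝ᵥ v ≤ 0 := by
    by_contra h
    push_neg at h
    set a := (ξ - q) ⬝ᵥ v
    set c := v ⬝ᵥ v
    set t := a / (c + 1) with htdef
    have ht0 : 0 < t := by positivity
    have htc : t * (c + 1) = a := div_mul_cancel₀ a (by positivity : (0:ℝ) < c + 1).ne'
    have h1 := hkey t ht0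
    rw [← htc] at h1
    nlinarith [h1, mul_pos ht0 ht0, hc]
  -- combine
  have h3 : ξstar ⬝ᵥ (x - z) ≤ 0 := hnc x hx
  have e1 : (ξ - q) ⬝ᵥ v = (x - z) ⬝ᵥ q - (x - z) ⬝ᵥ ξ := by
    rw [hv]
    simp only [sub_dotProduct, dotProduct_sub, dotProduct_comm ξ z, dotProduct_comm ξ x,
      dotProduct_comm q z, dotProduct_comm q x]
    ring
  have e2 : ξstar ⬝ᵥ (x - z) = (x - z) ⬝ᵥ ξstar := dotProduct_comm _ _
  have e3 : (x - z) ⬝ᵥ (ξ - ξstar) = (x - z) ⬝ᵥ ξ - (x - z) ⬝ᵥ ξstar := dotProduct_sub _ _ _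
  linarith [e1 ▸ ha, e2 ▸ h3, e3 ▸ le_refl ((x - z) ⬝ᵥ (ξ - ξstar))]
end

section
/- Assume Cᵀ·𝟙_n = 0, and assume strict feasibility: there exists (u₀, φ₀) with u_lo < u₀ < u_hi componentwise, ⟨φ₀, 𝟙_n⟩ = 0, G·u₀ − d − L·φ₀ = 0, T·B·Cᵀ·φ₀ = P^sch, and f_lo < B·Cᵀ·φ₀ < f_hi componentwise. Then a pair (u*, φ*) minimizes J over the feasible set F if and only if (u*, φ*) ∈ F and there exist λ ∈ ℝⁿ, π ∈ ℝ^{n_t}, and ρ⁺, ρ⁻ ∈ ℝ^m with ρ⁺ ≥ 0 and ρ⁻ ≥ 0 componentwise such that: (i) ⟨ρ⁺, B·Cᵀ·φ* − f_hi⟩ = 0 and ⟨ρ⁻, f_lo − B·Cᵀ·φ*⟩ = 0; (ii) ⟨∇J(u*) + Gᵀ·λ, z − u*⟩ ≥ 0 for all z ∈ Ω; (iii) −L·λ + C·B·Tᵀ·π + C·B·(ρ⁺ − ρ⁻) = 0. -/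
open Matrix

lemma combo_lt {a b x1 x2 y1 y2 : ℝ} (ha : 0 ≤ a) (hb : 0 ≤ b) (hab : a + b = 1)
    (h1 : x1 < y1) (h2 : x2 < y2) : a*x1 + b*x2 < a*y1 + b*y2 := by
  rcases eq_or_lt_of_le ha with h|h
  · have hb1 : b = 1 := by linarith
    subst hb1; rw [← h]; simpa using h2
  · have h1' : a*x1 < a*y1 := by nlinarith
    nlinarith [mul_le_mul_of_nonneg_left h2.le hb]

lemma nonneg_of_forall_pos {c K : ℝ} (h : ∀ ε > 0, 0 < c + ε*K) : 0 ≤ c := by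
  by_contra hc
  push_neg at hc
  rcases le_or_gt K 0 with hK|hK
  · have := h 1 one_pos; nlinarith
  · have := h (-c/(2*K)) (div_pos (by linarith) (by linarith))
    have hKne : (2*K) ≠ 0 := by linarith
    have heq : -c/(2*K)*K = -c/2 := by field_simp
    rw [heq] at this; linarith

lemma convex_grad_ineq {ι : Type*} [Fintype ι] {J : (ι → ℝ) → ℝ}
    (hJ : ContDiff ℝ 1 J) (hconv : ConvexOn ℝ Set.univ J) (x y : ι → ℝ) :
    J x + fderiv ℝ J x (y - x) ≤ J y := by
  set v := y - x with hv
  have hdiff : Differentiable ℝ J := hJ.differentiable one_ne_zero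
  set g : ℝ → ℝ := fun t => J (x + t • v) with hg
  have hgconv : ConvexOn ℝ Set.univ g := by
    refine ⟨convex_univ, fun s _ t _ a b ha hb hab => ?_⟩
    have hb' : b = 1 - a := by linarith
    subst hb'
    have hkey : x + (a*s+(1-a)*t) • v = a • (x + s • v) + (1-a) • (x + t • v) := by
      module
    simp only [hg, smul_eq_mul, hkey]
    exact hconv.2 (Set.mem_univ _) (Set.mem_univ _) ha hb hab
  have hline : HasDerivAt (fun t : ℝ => x + t • v) v 0 := by
    simpa using ((hasDerivAt_id (0:ℝ)).smul_const v).const_add x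
  have hgd : HasDerivAt g (fderiv ℝ J x v) 0 := by
    have h0 : HasFDerivAt J (fderiv ℝ J x) (x + (0:ℝ) • v) := by
      simpa using (hdiff x).hasFDerivAt
    exact h0.comp_hasDerivAt 0 hline
  have hsl := hgconv.le_slope_of_hasDerivAt (Set.mem_univ (0:ℝ)) (Set.mem_univ (1:ℝ)) one_pos hgd
  rw [slope_def_field] at hsl
  simp only [hg] at hsl
  have hxy : x + (1:ℝ) • v = y := by rw [hv]; simp
  have hx0 : x + (0:ℝ) • v = x := by simp
  rw [hxy, hx0] at hsl
  have : fderiv ℝ J x v ≤ J y - J x := by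
    simpa using hsl
  linarith

lemma matrix_farkas {ι κ : Type*} [Fintype ι] [Fintype κ] [DecidableEq ι] [DecidableEq κ]
    (A : Matrix ι κ ℝ) (c : κ → ℝ) (h : ∀ x : κ → ℝ, A *ᵥ x = 0 → c ⬝ᵥ x = 0) :
    ∃ y : ι → ℝ, Aᵀ *ᵥ y = c := by
  let eι := WithLp.equiv 2 (ι → ℝ)
  let eκ := WithLp.equiv 2 (κ → ℝ)
  let M : EuclideanSpace ℝ ι →ₗ[ℝ] EuclideanSpace ℝ κ :=
    { toFun := fun y => eκ.symm (Aᵀ *ᵥ (eι y))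
      map_add' := fun y z => by
        apply (WithLp.equiv 2 (κ → ℝ)).injective
        simp [Matrix.mulVec_add, eκ, eι]
      map_smul' := fun r y => by
        apply (WithLp.equiv 2 (κ → ℝ)).injective
        simp only [eκ, eι, Equiv.apply_symm_apply, RingHom.id_apply, WithLp.equiv_apply, WithLp.ofLp_smul,
          WithLp.equiv_symm_apply, WithLp.toLp_smul]
        funext j
        simp [Matrix.mulVec, dotProduct, Finset.mul_sum, mul_left_comm] }
  let S : Submodule ℝ (EuclideanSpace ℝ κ) := LinearMap.range M
  have hc : eκ.symm c ∈ Sᗮᗮ := by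
    rw [Submodule.mem_orthogonal]
    intro v hv
    have hAv : A *ᵥ (eκ v) = 0 := by
      funext i
      have hmem := hv (M (eι.symm (Pi.single i 1))) (LinearMap.mem_range_self M _)
      rw [PiLp.inner_apply] at hmem
      simp only [M, LinearMap.coe_mk, AddHom.coe_mk, eι, eκ, Equiv.apply_symm_apply,
        WithLp.equiv_symm_apply, PiLp.toLp_apply, RCLike.inner_apply, conj_trivial] at hmem
      have h2 : ∀ j, (Aᵀ *ᵥ (Pi.single i 1)) j = A i j := by
        intro j
        simp [Matrix.mulVec, dotProduct, Pi.single_apply]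
      simp only [WithLp.equiv_apply, WithLp.ofLp_toLp, h2] at hmem
      simpa [Matrix.mulVec, dotProduct, eκ, WithLp.equiv_apply, mul_comm] using hmem
    have hcv := h (eκ v) hAv
    rw [PiLp.inner_apply]
    simp only [WithLp.equiv_symm_apply, PiLp.toLp_apply, RCLike.inner_apply, conj_trivial, eκ]
    simpa [dotProduct, eκ, WithLp.equiv_apply, mul_comm] using hcv
  rw [Submodule.orthogonal_orthogonal] at hc
  obtain ⟨y, hy⟩ := hc
  exact ⟨eι y, congrArg eκ hy⟩

lemma deriv_zero_of_min {ι : Type*} [Fintype ι] {J : (ι → ℝ) → ℝ}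
    (hJ : ContDiff ℝ 1 J) (u v : ι → ℝ) (K : ℝ)
    (h : ∀ t : ℝ, J u ≤ J (u + t • v) + t * K) :
    fderiv ℝ J u v + K = 0 := by
  have hdiff : Differentiable ℝ J := hJ.differentiable one_ne_zero
  set g : ℝ → ℝ := fun t => J (u + t • v) + t * K with hg
  have hline : HasDerivAt (fun t : ℝ => u + t • v) v 0 := by
    simpa using ((hasDerivAt_id (0:ℝ)).smul_const v).const_add u
  have h0 : HasFDerivAt J (fderiv ℝ J u) (u + (0:ℝ) • v) := by
    simpa using (hdiff u).hasFDerivAt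
  have hgd : HasDerivAt g (fderiv ℝ J u v + K) 0 := by
    have h1 : HasDerivAt (fun t : ℝ => J (u + t • v)) (fderiv ℝ J u v) 0 :=
      h0.comp_hasDerivAt 0 hline
    have h2 : HasDerivAt (fun t : ℝ => t * K) K 0 := by
      simpa using (hasDerivAt_id (0:ℝ)).mul_const K
    exact h1.add h2
  have hmin : IsLocalMin g 0 := by
    apply Filter.Eventually.of_forall
    intro t
    simpa [hg] using h t
  exact hmin.hasDerivAt_eq_zero hgd

lemma clm_rep {ι : Type*} [Fintype ι] [DecidableEq ι] (f : (ℝ × (ι → ℝ)) →L[ℝ] ℝ)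
    (t : ℝ) (s : ι → ℝ) :
    f (t, s) = t * f (1, 0) + ∑ i, s i * f (0, Pi.single i 1) := by
  have hdecomp : (t, s) = t • ((1:ℝ), (0 : ι → ℝ)) +
      ∑ i, s i • (((0:ℝ), (Pi.single i (1:ℝ) : ι → ℝ)) : ℝ × (ι → ℝ)) := by
    rw [Prod.ext_iff]
    constructor
    · simp [Prod.fst_sum]
    · simp only [Prod.snd_add, Prod.smul_snd, smul_zero, Prod.snd_sum]
      rw [zero_add]
      funext j
      simp [Finset.sum_apply, Pi.single_apply, Finset.sum_ite_eq']
  rw [hdecomp, map_add, _root_.map_smul, map_sum]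
  simp [smul_eq_mul]
  refine Finset.sum_congr rfl fun i _ => ?_
  have h1 : ((0:ℝ), s i • (Pi.single i (1:ℝ) : ι → ℝ)) =
      s i • (((0:ℝ), (Pi.single i 1 : ι → ℝ)) : ℝ × (ι → ℝ)) := by
    simp
  rw [h1, _root_.map_smul, smul_eq_mul]

set_option maxHeartbeats 2000000 in
theorem fwd {n m ng nt : ℕ} (hn : 0 < n) (hm : 0 < m) (hng : 0 < ng) (hnt : 0 < nt)
    (G : Matrix (Fin n) (Fin ng) ℝ) (C : Matrix (Fin n) (Fin m) ℝ)
    (B : Matrix (Fin m) (Fin m) ℝ) (hB : B.IsDiag)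
    (T : Matrix (Fin nt) (Fin m) ℝ)
    (L : Matrix (Fin n) (Fin n) ℝ) (hL : L = C * B * Cᵀ)
    (d : Fin n → ℝ) (Psch : Fin nt → ℝ) (flo fhi : Fin m → ℝ)
    (ulo uhi : Fin ng → ℝ) (hbox : ulo ≤ uhi)
    (Ω : Set (Fin ng → ℝ)) (hΩ : Ω = {u | ulo ≤ u ∧ u ≤ uhi})
    (J : (Fin ng → ℝ) → ℝ) (hJ : ContDiff ℝ 1 J) (hconv : ConvexOn ℝ Set.univ J)
    (gradJ : (Fin ng → ℝ) → (Fin ng → ℝ))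
    (hgrad : ∀ u v : Fin ng → ℝ, fderiv ℝ J u v = gradJ u ⬝ᵥ v)
    (F : Set ((Fin ng → ℝ) × (Fin n → ℝ)))
    (hF : F = {q | q.1 ∈ Ω ∧ q.2 ⬝ᵥ (fun _ => 1) = 0 ∧
            G *ᵥ q.1 - d - L *ᵥ q.2 = 0 ∧ (T * B * Cᵀ) *ᵥ q.2 = Psch ∧
            flo ≤ (B * Cᵀ) *ᵥ q.2 ∧ (B * Cᵀ) *ᵥ q.2 ≤ fhi})
    (hC1 : Cᵀ *ᵥ (fun _ => 1) = 0)
    (hsf : ∃ u₀ : Fin ng → ℝ, ∃ φ₀ : Fin n → ℝ,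
            (∀ i, ulo i < u₀ i ∧ u₀ i < uhi i) ∧
            φ₀ ⬝ᵥ (fun _ => 1) = 0 ∧ G *ᵥ u₀ - d - L *ᵥ φ₀ = 0 ∧
            (T * B * Cᵀ) *ᵥ φ₀ = Psch ∧
            (∀ j, flo j < ((B * Cᵀ) *ᵥ φ₀) j ∧ ((B * Cᵀ) *ᵥ φ₀) j < fhi j))
    (ustar : Fin ng → ℝ) (φstar : Fin n → ℝ)
    (hfeas : (ustar, φstar) ∈ F) (hopt : ∀ q ∈ F, J ustar ≤ J q.1) :
    ∃ lam : Fin n → ℝ, ∃ piv : Fin nt → ℝ, ∃ rp rm : Fin m → ℝ,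
      0 ≤ rp ∧ 0 ≤ rm ∧
      rp ⬝ᵥ ((B * Cᵀ) *ᵥ φstar - fhi) = 0 ∧
      rm ⬝ᵥ (flo - (B * Cᵀ) *ᵥ φstar) = 0 ∧
      (∀ z ∈ Ω, 0 ≤ (gradJ ustar + Gᵀ *ᵥ lam) ⬝ᵥ (z - ustar)) ∧
      -(L *ᵥ lam) + (C * B * Tᵀ) *ᵥ piv + (C * B) *ᵥ (rp - rm) = 0 := by
  classical
  have hBsymm : Bᵀ = B := hB.isSymm
  have hLsymm : Lᵀ = L := by
    rw [hL, Matrix.transpose_mul, Matrix.transpose_mul, Matrix.transpose_transpose, hBsymm,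
      Matrix.mul_assoc]
  obtain ⟨u₀, φ₀, hu₀, hv₀1, hv₀2, hv₀3, hv₀4⟩ := hsf
  rw [hF] at hfeas
  obtain ⟨hsΩ, hs1, hs2, hs3, hs4, hs5⟩ := hfeas
  simp only at hs1 hs2 hs3 hs4 hs5 hsΩ
  rw [hΩ] at hsΩ
  obtain ⟨hslo, hshi⟩ := hsΩ
  set hfun : ((Fin ng → ℝ) × (Fin n → ℝ)) → (Fin ng ⊕ (Fin ng ⊕ (Fin m ⊕ Fin m))) → ℝ :=
    fun w => Sum.elim (fun i => ulo i - w.1 i)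
      (Sum.elim (fun i => w.1 i - uhi i)
        (Sum.elim (fun j => flo j - ((B * Cᵀ) *ᵥ w.2) j)
          (fun j => ((B * Cᵀ) *ᵥ w.2) j - fhi j))) with hhfun
  set Veq : ((Fin ng → ℝ) × (Fin n → ℝ)) → Prop := fun w => (w.2 ⬝ᵥ (fun _ => 1)) = 0 ∧
      G *ᵥ w.1 - d - L *ᵥ w.2 = 0 ∧ (T * B * Cᵀ) *ᵥ w.2 = Psch with hVeq
  have hveqstar : Veq (ustar, φstar) := ⟨hs1, hs2, hs3⟩
  have hveq₀ : Veq (u₀, φ₀) := ⟨hv₀1, hv₀2, hv₀3⟩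
  have hneg₀ : ∀ i, hfun (u₀, φ₀) i < 0 := by
    rintro (i | i | j | j) <;>
      simp only [hhfun, Sum.elim_inl, Sum.elim_inr, sub_neg] <;>
      first
        | exact (hu₀ i).1
        | exact (hu₀ i).2
        | exact (hv₀4 j).1
        | exact (hv₀4 j).2
  have hstar_nonpos : ∀ i, hfun (ustar, φstar) i ≤ 0 := by
    rintro (i | i | j | j) <;>
      simp only [hhfun, Sum.elim_inl, Sum.elim_inr, sub_nonpos] <;>
      first
        | exact hslo i
        | exact hshi i
        | exact hs4 j
        | exact hs5 j
  set A : Set (ℝ × ((Fin ng ⊕ (Fin ng ⊕ (Fin m ⊕ Fin m))) → ℝ)) :=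
    {p | ∃ w : (Fin ng → ℝ) × (Fin n → ℝ), Veq w ∧ J w.1 - J ustar < p.1 ∧
      ∀ i, hfun w i < p.2 i} with hA
  have hAopen : IsOpen A := by
    have hrw : A = ⋃ w ∈ {w : (Fin ng → ℝ) × (Fin n → ℝ) | Veq w},
        ({p : ℝ × ((Fin ng ⊕ (Fin ng ⊕ (Fin m ⊕ Fin m))) → ℝ) | J w.1 - J ustar < p.1} ∩
          ⋂ i, {p | hfun w i < p.2 i}) := by
      ext p
      constructor
      · rintro ⟨w, hv, h1, h2⟩
        exact Set.mem_biUnion hv ⟨h1, Set.mem_iInter.mpr h2⟩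
      · intro hp
        obtain ⟨w, hw, hmem⟩ := Set.mem_iUnion₂.mp hp
        exact ⟨w, hw, hmem.1, Set.mem_iInter.mp hmem.2⟩
    rw [hrw]
    refine isOpen_biUnion fun w _ => IsOpen.inter ?_ ?_
    · exact isOpen_lt continuous_const continuous_fst
    · exact isOpen_iInter_of_finite fun i =>
        isOpen_lt continuous_const ((continuous_apply i).comp continuous_snd)
  have hAconv : Convex ℝ A := by
    rintro p ⟨w1, hw1, h11, h12⟩ q ⟨w2, hw2, h21, h22⟩ a b ha hb hab
    have hb' : b = 1 - a := by linarith
    subst hb'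
    have hkeyaff : ∀ i, hfun (a • w1 + (1-a) • w2) i
        = a * hfun w1 i + (1-a) * hfun w2 i := by
      rintro (i | i | j | j) <;>
        simp only [hhfun, Sum.elim_inl, Sum.elim_inr, Prod.fst_add, Prod.snd_add,
          Prod.smul_fst, Prod.smul_snd, Matrix.mulVec_add, Matrix.mulVec_smul,
          Pi.add_apply, Pi.smul_apply, smul_eq_mul] <;> ring
    refine ⟨a • w1 + (1-a) • w2, ⟨?_, ?_, ?_⟩, ?_, ?_⟩
    · show (((a • w1 + (1-a) • w2).2) ⬝ᵥ fun _ => 1) = 0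
      have hsnd : (a • w1 + (1-a) • w2).2 = a • w1.2 + (1-a) • w2.2 := rfl
      rw [hsnd, add_dotProduct, smul_dotProduct, smul_dotProduct,
        hw1.1, hw2.1]
      simp
    · show G *ᵥ (a • w1 + (1-a) • w2).1 - d - L *ᵥ (a • w1 + (1-a) • w2).2 = 0
      have h1 : (a • w1 + (1-a) • w2).1 = a • w1.1 + (1-a) • w2.1 := rfl
      have h2 : (a • w1 + (1-a) • w2).2 = a • w1.2 + (1-a) • w2.2 := rfl
      rw [h1, h2]
      funext i
      have e1 := congrFun hw1.2.1 i
      have e2 := congrFun hw2.2.1 i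
      simp only [Matrix.mulVec_add, Matrix.mulVec_smul, Pi.sub_apply, Pi.add_apply,
        Pi.smul_apply, smul_eq_mul, Pi.zero_apply] at e1 e2 ⊢
      linear_combination a * e1 + (1-a) * e2
    · show (T * B * Cᵀ) *ᵥ (a • w1 + (1-a) • w2).2 = Psch
      have h2 : (a • w1 + (1-a) • w2).2 = a • w1.2 + (1-a) • w2.2 := rfl
      rw [h2]
      funext i
      have e1 := congrFun hw1.2.2 i
      have e2 := congrFun hw2.2.2 i
      simp only [Matrix.mulVec_add, Matrix.mulVec_smul, Pi.add_apply,
        Pi.smul_apply, smul_eq_mul] at e1 e2 ⊢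
      linear_combination a * e1 + (1-a) * e2
    · show J (a • w1 + (1-a) • w2).1 - J ustar < (a • p + (1-a) • q).1
      have h1 : (a • w1 + (1-a) • w2).1 = a • w1.1 + (1-a) • w2.1 := rfl
      have hR : (a • p + (1-a) • q).1 = a * p.1 + (1-a) * q.1 := rfl
      rw [h1, hR]
      have hconv2 := hconv.2 (Set.mem_univ w1.1) (Set.mem_univ w2.1) ha hb hab
      simp only [smul_eq_mul] at hconv2
      have hcl := combo_lt ha hb hab h11 h21
      calc J (a • w1.1 + (1-a) • w2.1) - J ustar
          ≤ (a * J w1.1 + (1-a) * J w2.1) - J ustar := by linarith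
        _ = a * (J w1.1 - J ustar) + (1-a) * (J w2.1 - J ustar) := by ring
        _ < a * p.1 + (1-a) * q.1 := hcl
    · intro i
      have hR : (a • p + (1-a) • q).2 i = a * p.2 i + (1-a) * q.2 i := rfl
      rw [hkeyaff i, hR]
      exact combo_lt ha hb hab (h12 i) (h22 i)
  have h0A : ((0:ℝ), (0 : (Fin ng ⊕ (Fin ng ⊕ (Fin m ⊕ Fin m))) → ℝ)) ∉ A := by
    rintro ⟨w, hveq, hJw, hhw⟩
    have hwF : w ∈ F := by
      rw [hF]
      obtain ⟨e1, e2, e3⟩ := hveq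
      refine ⟨?_, e1, e2, e3, ?_, ?_⟩
      · rw [hΩ]
        constructor
        · intro i
          have := hhw (Sum.inl i)
          simp only [hhfun, Sum.elim_inl, Pi.zero_apply] at this
          linarith
        · intro i
          have := hhw (Sum.inr (Sum.inl i))
          simp only [hhfun, Sum.elim_inl, Sum.elim_inr, Pi.zero_apply] at this
          linarith
      · intro j
        have := hhw (Sum.inr (Sum.inr (Sum.inl j)))
        simp only [hhfun, Sum.elim_inl, Sum.elim_inr, Pi.zero_apply] at this
        linarith
      · intro j
        have := hhw (Sum.inr (Sum.inr (Sum.inr j)))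
        simp only [hhfun, Sum.elim_inl, Sum.elim_inr, Pi.zero_apply] at this
        linarith
    have hge := hopt w hwF
    simp only at hJw
    linarith
  set p₀ : ℝ × ((Fin ng ⊕ (Fin ng ⊕ (Fin m ⊕ Fin m))) → ℝ) :=
    (J u₀ - J ustar + 1, fun i => hfun (u₀, φ₀) i + 1) with hp₀def
  have hp₀ : p₀ ∈ A := ⟨(u₀, φ₀), hveq₀, by simp [hp₀def], fun i => by simp [hp₀def]⟩
  obtain ⟨f, hf⟩ := geometric_hahn_banach_point_open hAconv hAopen h0A
  have hfzero : f ((0:ℝ), (0 : (Fin ng ⊕ (Fin ng ⊕ (Fin m ⊕ Fin m))) → ℝ)) = 0 := by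
    have h00 : ((0:ℝ), (0 : (Fin ng ⊕ (Fin ng ⊕ (Fin m ⊕ Fin m))) → ℝ))
        = (0 : ℝ × ((Fin ng ⊕ (Fin ng ⊕ (Fin m ⊕ Fin m))) → ℝ)) := rfl
    rw [h00, map_zero]
  have hfpos : ∀ b ∈ A, 0 < f b := fun b hb => by
    have := hf b hb
    rwa [hfzero] at this
  have hupA : ∀ (t : ℝ), 0 ≤ t → ∀ (e : ℝ × ((Fin ng ⊕ (Fin ng ⊕ (Fin m ⊕ Fin m))) → ℝ)),
      0 ≤ e.1 → (∀ i, 0 ≤ e.2 i) → p₀ + t • e ∈ A := by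
    intro t ht e he1 he2
    refine ⟨(u₀, φ₀), hveq₀, ?_, fun i => ?_⟩
    · have h1 : (p₀ + t • e).1 = p₀.1 + t * e.1 := rfl
      rw [h1, hp₀def]
      have := mul_nonneg ht he1
      simp only
      linarith
    · have h2 : (p₀ + t • e).2 i = p₀.2 i + t * e.2 i := rfl
      rw [h2, hp₀def]
      have := mul_nonneg ht (he2 i)
      simp only
      linarith
  have hfp₀ : 0 < f p₀ := hfpos _ hp₀
  have hρ : ∀ i, 0 ≤ f ((0:ℝ), Pi.single i (1:ℝ)) := by
    intro i
    by_contra hneg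
    push_neg at hneg
    have hne : f ((0:ℝ), Pi.single i (1:ℝ)) ≠ 0 := ne_of_lt hneg
    set t := f p₀ / (-(f ((0:ℝ), Pi.single i (1:ℝ)))) with htdef
    have ht : 0 < t := div_pos hfp₀ (by linarith)
    have hmem := hupA t ht.le ((0:ℝ), Pi.single i (1:ℝ)) le_rfl (fun i' => by
      by_cases h : i' = i
      · subst h; simp
      · simp [Pi.single_apply, h])
    have hv := hfpos _ hmem
    rw [map_add, _root_.map_smul, smul_eq_mul] at hv
    have htρ : t * f ((0:ℝ), Pi.single i (1:ℝ)) = - f p₀ := by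
      rw [htdef, div_neg, neg_mul, div_mul_eq_mul_div, mul_div_assoc, div_self hne, mul_one]
    rw [htρ] at hv
    linarith
  have hμ0 : 0 ≤ f ((1:ℝ), (0 : (Fin ng ⊕ (Fin ng ⊕ (Fin m ⊕ Fin m))) → ℝ)) := by
    by_contra hneg
    push_neg at hneg
    have hne : f ((1:ℝ), (0 : (Fin ng ⊕ (Fin ng ⊕ (Fin m ⊕ Fin m))) → ℝ)) ≠ 0 := ne_of_lt hneg
    set t := f p₀ / (-(f ((1:ℝ), (0 : (Fin ng ⊕ (Fin ng ⊕ (Fin m ⊕ Fin m))) → ℝ)))) with htdef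
    have ht : 0 < t := div_pos hfp₀ (by linarith)
    have hmem := hupA t ht.le ((1:ℝ), 0) zero_le_one (fun i' => le_rfl)
    have hv := hfpos _ hmem
    rw [map_add, _root_.map_smul, smul_eq_mul] at hv
    have htρ : t * f ((1:ℝ), (0 : (Fin ng ⊕ (Fin ng ⊕ (Fin m ⊕ Fin m))) → ℝ)) = - f p₀ := by
      rw [htdef, div_neg, neg_mul, div_mul_eq_mul_div, mul_div_assoc, div_self hne, mul_one]
    rw [htρ] at hv
    linarith
  have hkey : ∀ w : (Fin ng → ℝ) × (Fin n → ℝ), Veq w →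
      0 ≤ f ((1:ℝ), (0 : (Fin ng ⊕ (Fin ng ⊕ (Fin m ⊕ Fin m))) → ℝ)) * (J w.1 - J ustar)
        + ∑ i, f ((0:ℝ), Pi.single i (1:ℝ)) * hfun w i := by
    intro w hw
    apply nonneg_of_forall_pos
      (K := f ((1:ℝ), (0 : (Fin ng ⊕ (Fin ng ⊕ (Fin m ⊕ Fin m))) → ℝ))
        + ∑ i, f ((0:ℝ), Pi.single i (1:ℝ)))
    intro ε hε
    have hmem : ((J w.1 - J ustar + ε, fun i => hfun w i + ε) :
        ℝ × ((Fin ng ⊕ (Fin ng ⊕ (Fin m ⊕ Fin m))) → ℝ)) ∈ A :=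
      ⟨w, hw, by show J w.1 - J ustar < J w.1 - J ustar + ε; linarith,
        fun i => by show hfun w i < hfun w i + ε; linarith⟩
    have hval := hfpos _ hmem
    rw [clm_rep] at hval
    have hident : (J w.1 - J ustar + ε) * f ((1:ℝ), (0:(Fin ng ⊕ (Fin ng ⊕ (Fin m ⊕ Fin m))) → ℝ))
        + ∑ i, (hfun w i + ε) * f ((0:ℝ), Pi.single i (1:ℝ))
        = (f ((1:ℝ), (0:(Fin ng ⊕ (Fin ng ⊕ (Fin m ⊕ Fin m))) → ℝ)) * (J w.1 - J ustar)
            + ∑ i, f ((0:ℝ), Pi.single i (1:ℝ)) * hfun w i)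
          + ε * (f ((1:ℝ), (0:(Fin ng ⊕ (Fin ng ⊕ (Fin m ⊕ Fin m))) → ℝ))
            + ∑ i, f ((0:ℝ), Pi.single i (1:ℝ))) := by
      simp only [add_mul, Finset.sum_add_distrib, Finset.mul_sum]
      rw [Finset.sum_congr rfl
        (fun x _ => mul_comm (hfun w x) (f ((0:ℝ), Pi.single x (1:ℝ)))), ← Finset.mul_sum]
      ring
    rw [hident] at hval
    exact hval
  set μ : ℝ := f ((1:ℝ), (0 : (Fin ng ⊕ (Fin ng ⊕ (Fin m ⊕ Fin m))) → ℝ)) with hμdef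
  have hμpos : 0 < μ := by
    rcases eq_or_lt_of_le hμ0 with heq | h
    swap
    · exact h
    exfalso
    have h0 := hkey (u₀, φ₀) hveq₀
    rw [← heq, zero_mul, zero_add] at h0
    have hle : ∀ i ∈ Finset.univ, f ((0:ℝ), Pi.single i (1:ℝ)) * hfun (u₀, φ₀) i ≤ 0 :=
      fun i _ => mul_nonpos_of_nonneg_of_nonpos (hρ i) (hneg₀ i).le
    have hsum0 : ∑ i, f ((0:ℝ), Pi.single i (1:ℝ)) * hfun (u₀, φ₀) i = 0 :=
      le_antisymm (Finset.sum_nonpos hle) h0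
    have hzero : ∀ i, f ((0:ℝ), Pi.single i (1:ℝ)) = 0 := by
      intro i
      have hterm := (Finset.sum_eq_zero_iff_of_nonpos hle).mp hsum0 i (Finset.mem_univ i)
      rcases mul_eq_zero.mp hterm with h' | h'
      · exact h'
      · exact absurd h' (ne_of_lt (hneg₀ i))
    have hrep := clm_rep f p₀.1 p₀.2
    have hp₀pair : (p₀.1, p₀.2) = p₀ := rfl
    rw [hp₀pair] at hrep
    rw [← hμdef] at hrep
    rw [hrep, ← heq, mul_zero] at hfp₀
    simp only [hzero, mul_zero, Finset.sum_const_zero, add_zero] at hfp₀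
    exact lt_irrefl 0 hfp₀
  set ρ' : (Fin ng ⊕ (Fin ng ⊕ (Fin m ⊕ Fin m))) → ℝ :=
    fun i => f ((0:ℝ), Pi.single i (1:ℝ)) / μ with hρ'def
  have hρ'nonneg : ∀ i, 0 ≤ ρ' i := fun i => div_nonneg (hρ i) hμpos.le
  have hkey' : ∀ w : (Fin ng → ℝ) × (Fin n → ℝ), Veq w →
      0 ≤ (J w.1 - J ustar) + ∑ i, ρ' i * hfun w i := by
    intro w hw
    have h0 := hkey w hw
    have hdiv := div_nonneg h0 hμpos.le
    have hS' : ∑ i, ρ' i * hfun w i = (∑ i, f ((0:ℝ), Pi.single i (1:ℝ)) * hfun w i) / μ := by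
      rw [Finset.sum_div]
      refine Finset.sum_congr rfl fun i _ => ?_
      rw [hρ'def]
      ring
    have hrw : (μ * (J w.1 - J ustar) + ∑ i, f ((0:ℝ), Pi.single i (1:ℝ)) * hfun w i) / μ
        = (J w.1 - J ustar) + ∑ i, ρ' i * hfun w i := by
      rw [hS', add_div, mul_div_cancel_left₀ _ (ne_of_gt hμpos)]
    rw [hrw] at hdiv
    exact hdiv
  have hcomp : ∀ i, ρ' i * hfun (ustar, φstar) i = 0 := by
    have h0 := hkey' (ustar, φstar) hveqstar
    rw [sub_self, zero_add] at h0
    have hle : ∀ i ∈ Finset.univ, ρ' i * hfun (ustar, φstar) i ≤ 0 :=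
      fun i _ => mul_nonpos_of_nonneg_of_nonpos (hρ'nonneg i) (hstar_nonpos i)
    have hsum0 : ∑ i, ρ' i * hfun (ustar, φstar) i = 0 :=
      le_antisymm (Finset.sum_nonpos hle) h0
    exact fun i => (Finset.sum_eq_zero_iff_of_nonpos hle).mp hsum0 i (Finset.mem_univ i)
  have hsumstar : ∑ i, ρ' i * hfun (ustar, φstar) i = 0 :=
    Finset.sum_eq_zero fun i _ => hcomp i
  set σm : Fin ng → ℝ := fun i => ρ' (Sum.inl i) with hσm
  set σp : Fin ng → ℝ := fun i => ρ' (Sum.inr (Sum.inl i)) with hσp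
  set rmv : Fin m → ℝ := fun j => ρ' (Sum.inr (Sum.inr (Sum.inl j))) with hrmv
  set rpv : Fin m → ℝ := fun j => ρ' (Sum.inr (Sum.inr (Sum.inr j))) with hrpv
  -- stationarity
  have hstat : ∀ (δu : Fin ng → ℝ) (δφ : Fin n → ℝ), ((δφ ⬝ᵥ (fun _ => 1)) = 0) →
      (G *ᵥ δu - L *ᵥ δφ = 0) → ((T * B * Cᵀ) *ᵥ δφ = 0) →
      gradJ ustar ⬝ᵥ δu + ((σp - σm) ⬝ᵥ δu + (rpv - rmv) ⬝ᵥ ((B * Cᵀ) *ᵥ δφ)) = 0 := by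
    intro δu δφ hd1 hd2 hd3
    have hmin : ∀ t : ℝ, J ustar ≤ J (ustar + t • δu)
        + t * ((σp - σm) ⬝ᵥ δu + (rpv - rmv) ⬝ᵥ ((B * Cᵀ) *ᵥ δφ)) := by
      intro t
      have hveqt : Veq (ustar + t • δu, φstar + t • δφ) := by
        refine ⟨?_, ?_, ?_⟩
        · show ((φstar + t • δφ) ⬝ᵥ fun _ => 1) = 0
          rw [add_dotProduct, smul_dotProduct, hs1, hd1]
          simp
        · show G *ᵥ (ustar + t • δu) - d - L *ᵥ (φstar + t • δφ) = 0
          funext i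
          have e1 := congrFun hs2 i
          have e2 := congrFun hd2 i
          simp only [Matrix.mulVec_add, Matrix.mulVec_smul, Pi.sub_apply, Pi.add_apply,
            Pi.smul_apply, smul_eq_mul, Pi.zero_apply] at e1 e2 ⊢
          linear_combination e1 + t * e2
        · show (T * B * Cᵀ) *ᵥ (φstar + t • δφ) = Psch
          funext i
          have e1 := congrFun hs3 i
          have e2 := congrFun hd3 i
          simp only [Matrix.mulVec_add, Matrix.mulVec_smul, Pi.add_apply,
            Pi.smul_apply, smul_eq_mul, Pi.zero_apply] at e1 e2 ⊢
          linear_combination e1 + t * e2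
      have hk := hkey' _ hveqt
      set gv : (Fin ng ⊕ (Fin ng ⊕ (Fin m ⊕ Fin m))) → ℝ :=
        Sum.elim (fun i => σm i * (-δu i))
          (Sum.elim (fun i => σp i * δu i)
            (Sum.elim (fun j => rmv j * (-(((B * Cᵀ) *ᵥ δφ) j)))
              (fun j => rpv j * (((B * Cᵀ) *ᵥ δφ) j)))) with hgv
      have hterm : ∀ i, ρ' i * hfun (ustar + t • δu, φstar + t • δφ) i
          = ρ' i * hfun (ustar, φstar) i + t * gv i := by
        rintro (i | i | j | j) <;>
          simp only [hhfun, hgv, hσm, hσp, hrmv, hrpv, Sum.elim_inl, Sum.elim_inr,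
            Matrix.mulVec_add, Matrix.mulVec_smul, Pi.add_apply, Pi.smul_apply,
            smul_eq_mul] <;> ring
      have hsum : ∑ i, ρ' i * hfun (ustar + t • δu, φstar + t • δφ) i
          = t * ∑ i, gv i := by
        rw [Finset.sum_congr rfl fun i _ => hterm i, Finset.sum_add_distrib, hsumstar,
          zero_add, ← Finset.mul_sum]
      have hgvsum : ∑ i, gv i = (σp - σm) ⬝ᵥ δu + (rpv - rmv) ⬝ᵥ ((B * Cᵀ) *ᵥ δφ) := by
        simp only [hgv, Fintype.sum_sum_type, Sum.elim_inl, Sum.elim_inr,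
          dotProduct, Pi.sub_apply, sub_mul, mul_neg,
          Finset.sum_sub_distrib, Finset.sum_neg_distrib]
        ring
      rw [hsum, hgvsum] at hk
      have : (ustar + t • δu, φstar + t • δφ).1 = ustar + t • δu := rfl
      rw [this] at hk
      linarith
    have hz := deriv_zero_of_min hJ ustar δu _ hmin
    rw [hgrad] at hz
    exact hz
  -- Farkas setup
  set Abig : Matrix (Fin n ⊕ (Fin nt ⊕ Unit)) (Fin ng ⊕ Fin n) ℝ := fun r c =>
    Sum.elim (fun i => Sum.elim (fun j => G i j) (fun j => -(L i j)) c)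
      (Sum.elim (fun i => Sum.elim (fun _ => (0:ℝ)) (fun j => (T * B * Cᵀ) i j) c)
        (fun _ => Sum.elim (fun _ => (0:ℝ)) (fun _ => (1:ℝ)) c)) r with hAbig
  set cvec : (Fin ng ⊕ Fin n) → ℝ := Sum.elim (fun j => gradJ ustar j + σp j - σm j)
      (fun j => ((C * B) *ᵥ (rpv - rmv)) j) with hcvec
  have hfk : ∀ x : (Fin ng ⊕ Fin n) → ℝ, Abig *ᵥ x = 0 → cvec ⬝ᵥ x = 0 := by
    intro x hx
    have hrow1 : G *ᵥ (fun j => x (Sum.inl j)) - L *ᵥ (fun j => x (Sum.inr j)) = 0 := by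
      funext i
      have hxi := congrFun hx (Sum.inl i)
      simp only [hAbig, Matrix.mulVec, dotProduct, Fintype.sum_sum_type,
        Sum.elim_inl, Sum.elim_inr, Pi.zero_apply, neg_mul,
        Finset.sum_neg_distrib] at hxi
      simp only [Matrix.mulVec, dotProduct, Pi.sub_apply, Pi.zero_apply]
      linarith
    have hrow2 : (T * B * Cᵀ) *ᵥ (fun j => x (Sum.inr j)) = 0 := by
      funext i
      have hxi := congrFun hx (Sum.inr (Sum.inl i))
      simp only [hAbig, Matrix.mulVec, dotProduct, Fintype.sum_sum_type,
        Sum.elim_inl, Sum.elim_inr, Pi.zero_apply, zero_mul,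
        Finset.sum_const_zero, zero_add] at hxi
      simp only [Matrix.mulVec, dotProduct, Pi.zero_apply]
      linarith
    have hrow3 : ((fun j => x (Sum.inr j)) ⬝ᵥ (fun _ => (1:ℝ))) = 0 := by
      have hxi := congrFun hx (Sum.inr (Sum.inr ()))
      simp only [hAbig, Matrix.mulVec, dotProduct, Fintype.sum_sum_type,
        Sum.elim_inl, Sum.elim_inr, Pi.zero_apply, zero_mul,
        Finset.sum_const_zero, zero_add, one_mul] at hxi
      simp only [dotProduct, mul_one]
      linarith
    have hst := hstat _ _ hrow3 hrow1 hrow2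
    have hsw : ((C * B) *ᵥ (rpv - rmv)) ⬝ᵥ (fun j => x (Sum.inr j))
        = (rpv - rmv) ⬝ᵥ ((B * Cᵀ) *ᵥ (fun j => x (Sum.inr j))) := by
      rw [dotProduct_comm, Matrix.dotProduct_mulVec, ← Matrix.mulVec_transpose,
        Matrix.transpose_mul, hBsymm, dotProduct_comm]
    simp only [hcvec, dotProduct, Fintype.sum_sum_type, Sum.elim_inl, Sum.elim_inr,
      add_mul, sub_mul, Finset.sum_add_distrib, Finset.sum_sub_distrib] at hst hsw ⊢
    simp only [dotProduct, Pi.sub_apply, Pi.add_apply, add_mul, sub_mul,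
      Finset.sum_add_distrib, Finset.sum_sub_distrib] at hst hsw
    linarith
  obtain ⟨y, hy⟩ := matrix_farkas Abig cvec hfk
  have heq1 : ∀ j, (Gᵀ *ᵥ (fun i => y (Sum.inl i))) j = gradJ ustar j + σp j - σm j := by
    intro j
    have hyj := congrFun hy (Sum.inl j)
    simp only [Matrix.mulVec, dotProduct, Matrix.transpose_apply] at hyj
    simp only [hAbig, hcvec, Matrix.mulVec, dotProduct, Matrix.transpose_apply,
      Fintype.sum_sum_type, Sum.elim_inl, Sum.elim_inr, zero_mul,
      Finset.sum_const_zero, add_zero] at hyj ⊢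
    linarith
  have heq2 : ∀ j, -((Lᵀ *ᵥ (fun i => y (Sum.inl i))) j)
      + (((T * B * Cᵀ)ᵀ) *ᵥ (fun i => y (Sum.inr (Sum.inl i)))) j + y (Sum.inr (Sum.inr ()))
      = ((C * B) *ᵥ (rpv - rmv)) j := by
    intro j
    have hyj := congrFun hy (Sum.inr j)
    simp only [Matrix.mulVec, dotProduct, Matrix.transpose_apply] at hyj
    simp only [hAbig, hcvec, Matrix.mulVec, dotProduct, Matrix.transpose_apply,
      Fintype.sum_sum_type, Sum.elim_inl, Sum.elim_inr, neg_mul, one_mul,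
      Finset.sum_neg_distrib, Finset.univ_unique, Finset.sum_singleton] at hyj ⊢
    linarith
  -- ν = 0
  have hL1 : L *ᵥ (fun _ => (1:ℝ)) = 0 := by
    rw [hL, ← Matrix.mulVec_mulVec, hC1, Matrix.mulVec_zero]
  have hT1 : (T * B * Cᵀ) *ᵥ (fun _ => (1:ℝ)) = 0 := by
    rw [← Matrix.mulVec_mulVec, hC1, Matrix.mulVec_zero]
  have hB1 : (B * Cᵀ) *ᵥ (fun _ => (1:ℝ)) = 0 := by
    rw [← Matrix.mulVec_mulVec, hC1, Matrix.mulVec_zero]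
  have hν : y (Sum.inr (Sum.inr ())) = 0 := by
    have hsumeq := Finset.sum_congr rfl (fun j (_ : j ∈ Finset.univ) => heq2 j)
    have e1 : ∑ j, (Lᵀ *ᵥ (fun i => y (Sum.inl i))) j = 0 := by
      have : ∑ j, (Lᵀ *ᵥ (fun i => y (Sum.inl i))) j
          = (Lᵀ *ᵥ (fun i => y (Sum.inl i))) ⬝ᵥ (fun _ => (1:ℝ)) := by
        simp [dotProduct]
      rw [this, dotProduct_comm, Matrix.dotProduct_mulVec,
        Matrix.vecMul_transpose, hL1, zero_dotProduct]
    have e2 : ∑ j, (((T * B * Cᵀ)ᵀ) *ᵥ (fun i => y (Sum.inr (Sum.inl i)))) j = 0 := by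
      have : ∑ j, (((T * B * Cᵀ)ᵀ) *ᵥ (fun i => y (Sum.inr (Sum.inl i)))) j
          = (((T * B * Cᵀ)ᵀ) *ᵥ (fun i => y (Sum.inr (Sum.inl i)))) ⬝ᵥ (fun _ => (1:ℝ)) := by
        simp [dotProduct]
      rw [this, dotProduct_comm, Matrix.dotProduct_mulVec,
        Matrix.vecMul_transpose, hT1, zero_dotProduct]
    have e3 : ∑ j, ((C * B) *ᵥ (rpv - rmv)) j = 0 := by
      have : ∑ j, ((C * B) *ᵥ (rpv - rmv)) j
          = ((C * B) *ᵥ (rpv - rmv)) ⬝ᵥ (fun _ => (1:ℝ)) := by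
        simp [dotProduct]
      rw [this, dotProduct_comm, Matrix.dotProduct_mulVec]
      have hvm : (fun _ => (1:ℝ)) ᵥ* (C * B) = (B * Cᵀ) *ᵥ (fun _ => (1:ℝ)) := by
        rw [← Matrix.mulVec_transpose, Matrix.transpose_mul, hBsymm]
      rw [hvm, hB1, dotProduct_comm, dotProduct_zero]
    simp only [Finset.sum_add_distrib, Finset.sum_neg_distrib, e1, e2, e3,
      Finset.sum_const, Finset.card_univ, Fintype.card_fin, nsmul_eq_mul] at hsumeq
    have hnne : (n : ℝ) ≠ 0 := Nat.cast_ne_zero.mpr hn.ne'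
    rw [neg_zero, zero_add, zero_add] at hsumeq
    exact (mul_eq_zero.mp hsumeq).resolve_left hnne
  have htrT : (T * B * Cᵀ)ᵀ = C * B * Tᵀ := by
    rw [Matrix.transpose_mul, Matrix.transpose_mul, Matrix.transpose_transpose, hBsymm,
      Matrix.mul_assoc]
  refine ⟨fun i => -(y (Sum.inl i)), fun i => -(y (Sum.inr (Sum.inl i))), rpv, rmv,
    ?_, ?_, ?_, ?_, ?_, ?_⟩
  · intro j
    exact hρ'nonneg _
  · intro j
    exact hρ'nonneg _
  · simp only [dotProduct, Pi.sub_apply]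
    refine Finset.sum_eq_zero fun j _ => ?_
    have hcj := hcomp (Sum.inr (Sum.inr (Sum.inr j)))
    simpa [hhfun, hrpv] using hcj
  · simp only [dotProduct, Pi.sub_apply]
    refine Finset.sum_eq_zero fun j _ => ?_
    have hcj := hcomp (Sum.inr (Sum.inr (Sum.inl j)))
    simpa [hhfun, hrmv] using hcj
  · intro z hz
    rw [hΩ] at hz
    obtain ⟨hz1, hz2⟩ := hz
    have hneg1 : (fun i => -(y (Sum.inl i))) = -(fun i => y (Sum.inl i)) := rfl
    simp only [dotProduct, Pi.add_apply, Pi.sub_apply, hneg1, Matrix.mulVec_neg,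
      Pi.neg_apply]
    refine Finset.sum_nonneg fun j _ => ?_
    rw [heq1 j]
    have hm1 := hcomp (Sum.inl j)
    have hp1 := hcomp (Sum.inr (Sum.inl j))
    simp only [hhfun, Sum.elim_inl, Sum.elim_inr] at hm1 hp1
    have hσm0 : 0 ≤ σm j := hρ'nonneg _
    have hσp0 : 0 ≤ σp j := hρ'nonneg _
    have hb1 := mul_nonneg hσm0 (sub_nonneg.mpr (hz1 j))
    have hb2 := mul_nonneg hσp0 (sub_nonneg.mpr (hz2 j))
    nlinarith [hb1, hb2, hm1, hp1]
  · funext j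
    have h2 := heq2 j
    rw [hν, add_zero, htrT, hLsymm] at h2
    have hneg1 : (fun i => -(y (Sum.inl i))) = -(fun i => y (Sum.inl i)) := rfl
    have hneg2 : (fun i => -(y (Sum.inr (Sum.inl i)))) = -(fun i => y (Sum.inr (Sum.inl i))) := rfl
    simp only [Pi.add_apply, Pi.neg_apply, hneg1, hneg2, Matrix.mulVec_neg, Pi.zero_apply]
    linarith

theorem back {n m ng nt : ℕ} (hn : 0 < n) (hm : 0 < m) (hng : 0 < ng) (hnt : 0 < nt)
    (G : Matrix (Fin n) (Fin ng) ℝ) (C : Matrix (Fin n) (Fin m) ℝ)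
    (B : Matrix (Fin m) (Fin m) ℝ) (hB : B.IsDiag)
    (T : Matrix (Fin nt) (Fin m) ℝ)
    (L : Matrix (Fin n) (Fin n) ℝ) (hL : L = C * B * Cᵀ)
    (d : Fin n → ℝ) (Psch : Fin nt → ℝ) (flo fhi : Fin m → ℝ)
    (ulo uhi : Fin ng → ℝ) (hbox : ulo ≤ uhi)
    (Ω : Set (Fin ng → ℝ)) (hΩ : Ω = {u | ulo ≤ u ∧ u ≤ uhi})
    (J : (Fin ng → ℝ) → ℝ) (hJ : ContDiff ℝ 1 J) (hconv : ConvexOn ℝ Set.univ J)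
    (gradJ : (Fin ng → ℝ) → (Fin ng → ℝ))
    (hgrad : ∀ u v : Fin ng → ℝ, fderiv ℝ J u v = gradJ u ⬝ᵥ v)
    (F : Set ((Fin ng → ℝ) × (Fin n → ℝ)))
    (hF : F = {q | q.1 ∈ Ω ∧ q.2 ⬝ᵥ (fun _ => 1) = 0 ∧
            G *ᵥ q.1 - d - L *ᵥ q.2 = 0 ∧ (T * B * Cᵀ) *ᵥ q.2 = Psch ∧
            flo ≤ (B * Cᵀ) *ᵥ q.2 ∧ (B * Cᵀ) *ᵥ q.2 ≤ fhi})
    (ustar : Fin ng → ℝ) (φstar : Fin n → ℝ)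
    (hfeas : (ustar, φstar) ∈ F)
    (lam : Fin n → ℝ) (piv : Fin nt → ℝ) (rp rm : Fin m → ℝ)
    (hrp : 0 ≤ rp) (hrm : 0 ≤ rm)
    (hcp : rp ⬝ᵥ ((B * Cᵀ) *ᵥ φstar - fhi) = 0)
    (hcm : rm ⬝ᵥ (flo - (B * Cᵀ) *ᵥ φstar) = 0)
    (hvi : ∀ z ∈ Ω, 0 ≤ (gradJ ustar + Gᵀ *ᵥ lam) ⬝ᵥ (z - ustar))
    (hst : -(L *ᵥ lam) + (C * B * Tᵀ) *ᵥ piv + (C * B) *ᵥ (rp - rm) = 0) :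
    ∀ q ∈ F, J ustar ≤ J q.1 := by
  have hBsymm : Bᵀ = B := hB.isSymm
  have hLsymm : Lᵀ = L := by
    rw [hL, Matrix.transpose_mul, Matrix.transpose_mul, Matrix.transpose_transpose, hBsymm,
      Matrix.mul_assoc]
  rintro ⟨u, φ⟩ hq
  rw [hF] at hq hfeas
  obtain ⟨hqΩ, hq1, hq2, hq3, hq4, hq5⟩ := hq
  obtain ⟨hsΩ, hs1, hs2, hs3, hs4, hs5⟩ := hfeas
  simp only at hq2 hq3 hq4 hq5 hs2 hs3 hs4 hs5 hqΩ hsΩ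
  -- gradient inequality
  have hgi : J ustar + gradJ ustar ⬝ᵥ (u - ustar) ≤ J u := by
    have := convex_grad_ineq hJ hconv ustar u
    rwa [hgrad] at this
  -- variational inequality at z = u
  have hvi' : 0 ≤ (gradJ ustar + Gᵀ *ᵥ lam) ⬝ᵥ (u - ustar) := hvi u hqΩ
  -- compute (Gᵀ lam) ⬝ (u - ustar) ≤ 0
  have hGsub : G *ᵥ (u - ustar) = L *ᵥ (φ - φstar) := by
    rw [Matrix.mulVec_sub, Matrix.mulVec_sub]
    have := sub_eq_zero.mpr (hq2.trans hs2.symm)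
    funext i
    have h1 := congrFun hq2 i
    have h2 := congrFun hs2 i
    simp only [Pi.sub_apply, Pi.zero_apply] at h1 h2 ⊢
    linarith
  have hkey : (Gᵀ *ᵥ lam) ⬝ᵥ (u - ustar) ≤ 0 := by
    have e1 : (Gᵀ *ᵥ lam) ⬝ᵥ (u - ustar) = lam ⬝ᵥ (G *ᵥ (u - ustar)) := by
      rw [Matrix.mulVec_transpose, ← Matrix.dotProduct_mulVec]
    rw [e1, hGsub]
    have e2 : lam ⬝ᵥ (L *ᵥ (φ - φstar)) = (L *ᵥ lam) ⬝ᵥ (φ - φstar) := by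
      rw [Matrix.dotProduct_mulVec]
      congr 1
      rw [← Matrix.mulVec_transpose, hLsymm]
    rw [e2]
    have hLlam : L *ᵥ lam = (C * B * Tᵀ) *ᵥ piv + (C * B) *ᵥ (rp - rm) := by
      funext i
      have := congrFun hst i
      simp only [Pi.add_apply, Pi.neg_apply, Pi.zero_apply] at this ⊢
      linarith
    rw [hLlam, add_dotProduct]
    have hterm1 : ((C * B * Tᵀ) *ᵥ piv) ⬝ᵥ (φ - φstar) = 0 := by
      rw [dotProduct_comm, Matrix.dotProduct_mulVec]
      have : (φ - φstar) ᵥ* (C * B * Tᵀ) = (T * B * Cᵀ) *ᵥ (φ - φstar) := by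
        rw [← Matrix.vecMul_transpose]
        congr 1
        rw [Matrix.transpose_mul, Matrix.transpose_mul, Matrix.transpose_transpose, hBsymm,
          Matrix.mul_assoc]
      rw [this, Matrix.mulVec_sub, hq3, hs3, sub_self, zero_dotProduct]
    have hterm2 : ((C * B) *ᵥ (rp - rm)) ⬝ᵥ (φ - φstar) ≤ 0 := by
      rw [dotProduct_comm, Matrix.dotProduct_mulVec]
      have hvm : (φ - φstar) ᵥ* (C * B) = (B * Cᵀ) *ᵥ (φ - φstar) := by
        rw [← Matrix.vecMul_transpose]
        congr 1
        rw [Matrix.transpose_mul, Matrix.transpose_transpose, hBsymm]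
      rw [hvm, Matrix.mulVec_sub]
      set a := (B * Cᵀ) *ᵥ φ with ha
      set as := (B * Cᵀ) *ᵥ φstar with has
      have hsplit : (a - as) ⬝ᵥ (rp - rm) = rp ⬝ᵥ (a - fhi) - rp ⬝ᵥ (as - fhi)
          + (rm ⬝ᵥ (flo - a) - rm ⬝ᵥ (flo - as)) := by
        simp only [dotProduct_sub, sub_dotProduct, dotProduct_comm a,
          dotProduct_comm as, dotProduct_sub]
        ring
      rw [hsplit]
      have hz1 : rp ⬝ᵥ (as - fhi) = 0 := hcp
      have hz2 : rm ⬝ᵥ (flo - as) = 0 := hcm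
      have hn1 : rp ⬝ᵥ (a - fhi) ≤ 0 := by
        apply Finset.sum_nonpos
        intro j _
        exact mul_nonpos_of_nonneg_of_nonpos (hrp j) (by simpa using sub_nonpos.mpr (hq5 j))
      have hn2 : rm ⬝ᵥ (flo - a) ≤ 0 := by
        apply Finset.sum_nonpos
        intro j _
        exact mul_nonpos_of_nonneg_of_nonpos (hrm j) (by simpa using sub_nonpos.mpr (hq4 j))
      linarith
    linarith
  have : 0 ≤ gradJ ustar ⬝ᵥ (u - ustar) := by
    rw [add_dotProduct] at hvi'
    linarith
  simpa using hgi.trans' (by linarith)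


theorem stmt3 {n m ng nt : ℕ} (hn : 0 < n) (hm : 0 < m) (hng : 0 < ng) (hnt : 0 < nt)
    (G : Matrix (Fin n) (Fin ng) ℝ) (C : Matrix (Fin n) (Fin m) ℝ)
    (B : Matrix (Fin m) (Fin m) ℝ) (hB : B.IsDiag)
    (T : Matrix (Fin nt) (Fin m) ℝ)
    (L : Matrix (Fin n) (Fin n) ℝ) (hL : L = C * B * Cᵀ)
    (d : Fin n → ℝ) (Psch : Fin nt → ℝ) (flo fhi : Fin m → ℝ)
    (ulo uhi : Fin ng → ℝ) (hbox : ulo ≤ uhi)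
    (Ω : Set (Fin ng → ℝ)) (hΩ : Ω = {u | ulo ≤ u ∧ u ≤ uhi})
    (J : (Fin ng → ℝ) → ℝ) (hJ : ContDiff ℝ 1 J) (hconv : ConvexOn ℝ Set.univ J)
    (gradJ : (Fin ng → ℝ) → (Fin ng → ℝ))
    (hgrad : ∀ u v : Fin ng → ℝ, fderiv ℝ J u v = gradJ u ⬝ᵥ v)
    (F : Set ((Fin ng → ℝ) × (Fin n → ℝ)))
    (hF : F = {q | q.1 ∈ Ω ∧ q.2 ⬝ᵥ (fun _ => 1) = 0 ∧
            G *ᵥ q.1 - d - L *ᵥ q.2 = 0 ∧ (T * B * Cᵀ) *ᵥ q.2 = Psch ∧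
            flo ≤ (B * Cᵀ) *ᵥ q.2 ∧ (B * Cᵀ) *ᵥ q.2 ≤ fhi})
    (hC1 : Cᵀ *ᵥ (fun _ => 1) = 0)
    (hsf : ∃ u₀ : Fin ng → ℝ, ∃ φ₀ : Fin n → ℝ,
            (∀ i, ulo i < u₀ i ∧ u₀ i < uhi i) ∧
            φ₀ ⬝ᵥ (fun _ => 1) = 0 ∧ G *ᵥ u₀ - d - L *ᵥ φ₀ = 0 ∧
            (T * B * Cᵀ) *ᵥ φ₀ = Psch ∧
            (∀ j, flo j < ((B * Cᵀ) *ᵥ φ₀) j ∧ ((B * Cᵀ) *ᵥ φ₀) j < fhi j))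
    (ustar : Fin ng → ℝ) (φstar : Fin n → ℝ) :
    ((ustar, φstar) ∈ F ∧ ∀ q ∈ F, J ustar ≤ J q.1) ↔
    ((ustar, φstar) ∈ F ∧ ∃ lam : Fin n → ℝ, ∃ piv : Fin nt → ℝ, ∃ rp rm : Fin m → ℝ,
      0 ≤ rp ∧ 0 ≤ rm ∧
      rp ⬝ᵥ ((B * Cᵀ) *ᵥ φstar - fhi) = 0 ∧
      rm ⬝ᵥ (flo - (B * Cᵀ) *ᵥ φstar) = 0 ∧
      (∀ z ∈ Ω, 0 ≤ (gradJ ustar + Gᵀ *ᵥ lam) ⬝ᵥ (z - ustar)) ∧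
      -(L *ᵥ lam) + (C * B * Tᵀ) *ᵥ piv + (C * B) *ᵥ (rp - rm) = 0) := by
  constructor
  · rintro ⟨hfeas, hopt⟩
    exact ⟨hfeas, fwd hn hm hng hnt G C B hB T L hL d Psch flo fhi ulo uhi hbox Ω hΩ J hJ
      hconv gradJ hgrad F hF hC1 hsf ustar φstar hfeas hopt⟩
  · rintro ⟨hfeas, lam, piv, rp, rm, hrp, hrm, hcp, hcm, hvi, hst⟩
    exact ⟨hfeas, back hn hm hng hnt G C B hB T L hL d Psch flo fhi ulo uhi hbox Ω hΩ J hJ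
      hconv gradJ hgrad F hF ustar φstar hfeas lam piv rp rm hrp hrm hcp hcm hvi hst⟩
end

section
/- Assume J is m_J-strongly monotone in the gradient on Ω for some m_J > 0, i.e., ⟨∇J(u) − ∇J(v), u − v⟩ ≥ m_J·‖u − v‖² for all u, v ∈ Ω, and assume that every φ ∈ ℝⁿ with ⟨φ, 𝟙_n⟩ = 0 and L·φ = 0 satisfies φ = 0. If (u₁, φ₁) ∈ F and (u₂, φ₂) ∈ F both minimize J over the feasible set F, then u₁ = u₂ and φ₁ = φ₂. -/
open Matrix

theorem stmt4 {n m ng nt : ℕ} (hn : 0 < n) (hm : 0 < m) (hng : 0 < ng) (hnt : 0 < nt)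
    (G : Matrix (Fin n) (Fin ng) ℝ) (C : Matrix (Fin n) (Fin m) ℝ)
    (B : Matrix (Fin m) (Fin m) ℝ) (hB : B.IsDiag)
    (T : Matrix (Fin nt) (Fin m) ℝ)
    (L : Matrix (Fin n) (Fin n) ℝ) (hL : L = C * B * Cᵀ)
    (d : Fin n → ℝ) (Psch : Fin nt → ℝ) (flo fhi : Fin m → ℝ)
    (ulo uhi : Fin ng → ℝ) (hbox : ulo ≤ uhi)
    (Ω : Set (Fin ng → ℝ)) (hΩ : Ω = {u | ulo ≤ u ∧ u ≤ uhi})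
    (J : (Fin ng → ℝ) → ℝ) (hJ : ContDiff ℝ 1 J) (hconv : ConvexOn ℝ Set.univ J)
    (gradJ : (Fin ng → ℝ) → (Fin ng → ℝ))
    (hgrad : ∀ u v : Fin ng → ℝ, fderiv ℝ J u v = gradJ u ⬝ᵥ v)
    (F : Set ((Fin ng → ℝ) × (Fin n → ℝ)))
    (hF : F = {q | q.1 ∈ Ω ∧ q.2 ⬝ᵥ (fun _ => 1) = 0 ∧
            G *ᵥ q.1 - d - L *ᵥ q.2 = 0 ∧ (T * B * Cᵀ) *ᵥ q.2 = Psch ∧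
            flo ≤ (B * Cᵀ) *ᵥ q.2 ∧ (B * Cᵀ) *ᵥ q.2 ≤ fhi})
    (mJ : ℝ) (hmJ : 0 < mJ)
    (hsm : ∀ u ∈ Ω, ∀ v ∈ Ω, mJ * ((u - v) ⬝ᵥ (u - v)) ≤ (gradJ u - gradJ v) ⬝ᵥ (u - v))
    (hker : ∀ φ : Fin n → ℝ, φ ⬝ᵥ (fun _ => 1) = 0 → L *ᵥ φ = 0 → φ = 0)
    (u₁ u₂ : Fin ng → ℝ) (φ₁ φ₂ : Fin n → ℝ)
    (h₁ : (u₁, φ₁) ∈ F ∧ ∀ q ∈ F, J u₁ ≤ J q.1)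
    (h₂ : (u₂, φ₂) ∈ F ∧ ∀ q ∈ F, J u₂ ≤ J q.1) :
    u₁ = u₂ ∧ φ₁ = φ₂ := by
  -- F is convex
  have hconvF : Convex ℝ F := by
    subst hF hΩ
    rintro ⟨p1, p2⟩ ⟨⟨hp1, hp2⟩, hpd, hpG, hpT, hplo, hphi⟩
      ⟨q1, q2⟩ ⟨⟨hq1, hq2⟩, hqd, hqG, hqT, hqlo, hqhi⟩ a b ha hb hab
    refine ⟨⟨?_, ?_⟩, ?_, ?_, ?_, ?_, ?_⟩
    · intro i
      simp only [Prod.fst_add, Prod.smul_fst, Pi.add_apply, Pi.smul_apply, smul_eq_mul]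
      have e1 : a * ulo i ≤ a * p1 i := mul_le_mul_of_nonneg_left (hp1 i) ha
      have e2 : b * ulo i ≤ b * q1 i := mul_le_mul_of_nonneg_left (hq1 i) hb
      have e3 : a * ulo i + b * ulo i = ulo i := by rw [← add_mul, hab, one_mul]
      linarith
    · intro i
      simp only [Prod.fst_add, Prod.smul_fst, Pi.add_apply, Pi.smul_apply, smul_eq_mul]
      have e1 : a * p1 i ≤ a * uhi i := mul_le_mul_of_nonneg_left (hp2 i) ha
      have e2 : b * q1 i ≤ b * uhi i := mul_le_mul_of_nonneg_left (hq2 i) hb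
      have e3 : a * uhi i + b * uhi i = uhi i := by rw [← add_mul, hab, one_mul]
      linarith
    · show (a • p2 + b • q2) ⬝ᵥ _ = 0
      rw [add_dotProduct, smul_dotProduct, smul_dotProduct, hpd, hqd]
      simp
    · show G *ᵥ (a • p1 + b • q1) - d - L *ᵥ (a • p2 + b • q2) = 0
      have hd : d = a • d + b • d := by rw [← add_smul, hab, one_smul]
      rw [mulVec_add, mulVec_smul, mulVec_add, mulVec_smul, mulVec_smul, mulVec_smul]
      nth_rewrite 1 [hd]
      have h1 : G *ᵥ p1 - d - L *ᵥ p2 = 0 := hpG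
      have h2 : G *ᵥ q1 - d - L *ᵥ q2 = 0 := hqG
      funext i
      have e1 := congrFun h1 i
      have e2 := congrFun h2 i
      simp only [Pi.sub_apply, Pi.zero_apply] at e1 e2 ⊢
      simp only [Pi.add_apply, Pi.smul_apply, smul_eq_mul]
      nlinarith
    · show (T * B * Cᵀ) *ᵥ (a • p2 + b • q2) = Psch
      rw [mulVec_add, mulVec_smul, mulVec_smul, hpT, hqT, ← add_smul, hab, one_smul]
    · show flo ≤ (B * Cᵀ) *ᵥ (a • p2 + b • q2)
      rw [mulVec_add, mulVec_smul, mulVec_smul]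
      intro i
      have e1 : a * flo i ≤ a * ((B * Cᵀ) *ᵥ p2) i := mul_le_mul_of_nonneg_left (hplo i) ha
      have e2 : b * flo i ≤ b * ((B * Cᵀ) *ᵥ q2) i := mul_le_mul_of_nonneg_left (hqlo i) hb
      have e3 : a * flo i + b * flo i = flo i := by rw [← add_mul, hab, one_mul]
      simp only [Pi.add_apply, Pi.smul_apply, smul_eq_mul]
      linarith
    · show (B * Cᵀ) *ᵥ (a • p2 + b • q2) ≤ fhi
      rw [mulVec_add, mulVec_smul, mulVec_smul]
      intro i
      have e1 : a * ((B * Cᵀ) *ᵥ p2) i ≤ a * fhi i := mul_le_mul_of_nonneg_left (hphi i) ha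
      have e2 : b * ((B * Cᵀ) *ᵥ q2) i ≤ b * fhi i := mul_le_mul_of_nonneg_left (hqhi i) hb
      have e3 : a * fhi i + b * fhi i = fhi i := by rw [← add_mul, hab, one_mul]
      simp only [Pi.add_apply, Pi.smul_apply, smul_eq_mul]
      linarith
  have hJdiff : Differentiable ℝ J := hJ.differentiable one_ne_zero
  -- variational inequality at a minimizer
  have varineq : ∀ (p q : (Fin ng → ℝ) × (Fin n → ℝ)), p ∈ F → q ∈ F →
      (∀ r ∈ F, J p.1 ≤ J r.1) → 0 ≤ gradJ p.1 ⬝ᵥ (q.1 - p.1) := by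
    intro p q hp hq hmin
    have hfd : HasFDerivAt (fun r : (Fin ng → ℝ) × (Fin n → ℝ) => J r.1)
        ((fderiv ℝ J p.1).comp (ContinuousLinearMap.fst ℝ _ _)) p :=
      (hJdiff p.1).hasFDerivAt.comp p (hasFDerivAt_fst)
    have hlocmin : IsLocalMinOn (fun r : (Fin ng → ℝ) × (Fin n → ℝ) => J r.1) F p := by
      have : IsMinOn (fun r : (Fin ng → ℝ) × (Fin n → ℝ) => J r.1) F p :=
        isMinOn_iff.mpr fun x hx => hmin x hx
      exact this.filter_mono inf_le_right
    have hcone : q - p ∈ posTangentConeAt F p :=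
      sub_mem_posTangentConeAt_of_segment_subset (hconvF.segment_subset hp hq)
    have h0 := hlocmin.hasFDerivWithinAt_nonneg hfd.hasFDerivWithinAt hcone
    have : ((fderiv ℝ J p.1).comp (ContinuousLinearMap.fst ℝ _ _)) (q - p)
        = gradJ p.1 ⬝ᵥ (q.1 - p.1) := by
      simp [ContinuousLinearMap.comp_apply, hgrad]
    linarith [this ▸ h0]
  have v1 := varineq (u₁, φ₁) (u₂, φ₂) h₁.1 h₂.1 h₁.2
  have v2 := varineq (u₂, φ₂) (u₁, φ₁) h₂.1 h₁.1 h₂.2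
  simp only at v1 v2
  -- strong monotonicity forces u₁ = u₂
  have hΩ1 : u₁ ∈ Ω := by
    have := h₁.1; rw [hF] at this; exact this.1
  have hΩ2 : u₂ ∈ Ω := by
    have := h₂.1; rw [hF] at this; exact this.1
  have hmono := hsm u₁ hΩ1 u₂ hΩ2
  have hsum : (gradJ u₁ - gradJ u₂) ⬝ᵥ (u₁ - u₂) ≤ 0 := by
    have e1 : gradJ u₁ ⬝ᵥ (u₂ - u₁) = - (gradJ u₁ ⬝ᵥ (u₁ - u₂)) := by
      rw [← dotProduct_neg, neg_sub]
    have e2 : (gradJ u₁ - gradJ u₂) ⬝ᵥ (u₁ - u₂)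
        = gradJ u₁ ⬝ᵥ (u₁ - u₂) - gradJ u₂ ⬝ᵥ (u₁ - u₂) := by
      rw [sub_dotProduct]
    rw [e2]
    rw [e1] at v1
    linarith
  have hzero : (u₁ - u₂) ⬝ᵥ (u₁ - u₂) = 0 := by
    have hnn : 0 ≤ (u₁ - u₂) ⬝ᵥ (u₁ - u₂) := by
      apply Finset.sum_nonneg; intro i _; exact mul_self_nonneg _
    nlinarith
  have huu : u₁ = u₂ := by
    have := dotProduct_self_eq_zero.mp hzero
    exact sub_eq_zero.mp this
  refine ⟨huu, ?_⟩
  -- now φ₁ = φ₂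
  have m1 := h₁.1; have m2 := h₂.1
  rw [hF] at m1 m2
  obtain ⟨-, hd1, hG1, -, -, -⟩ := m1
  obtain ⟨-, hd2, hG2, -, -, -⟩ := m2
  have hLφ : L *ᵥ (φ₁ - φ₂) = 0 := by
    rw [mulVec_sub]
    have e1 : L *ᵥ φ₁ = G *ᵥ u₁ - d := by
      funext i; have := congrFun hG1 i
      simp only [Pi.sub_apply, Pi.zero_apply] at this ⊢; linarith
    have e2 : L *ᵥ φ₂ = G *ᵥ u₂ - d := by
      funext i; have := congrFun hG2 i
      simp only [Pi.sub_apply, Pi.zero_apply] at this ⊢; linarith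
    rw [e1, e2, huu]; simp
  have hdφ : (φ₁ - φ₂) ⬝ᵥ (fun _ => 1) = 0 := by
    rw [sub_dotProduct, hd1, hd2, sub_zero]
  have := hker (φ₁ - φ₂) hdφ hLφ
  exact sub_eq_zero.mp this
end

section
/- Let η > 0 and d_u, d_ω > 0. Let ũ, ỹ, p̃, w̃ : ℝ → ℝ^{n_g} be continuous functions, define the incremental wave variables σ̃_p^±(t) := (p̃(t) ∓ η·w̃(t))/√(2η) and σ̃_o^±(t) := (ũ(t) ± η·ỹ(t))/√(2η), and assume the delay relations σ̃_p^−(t) = σ̃_o^+(t − d_u) and σ̃_o^−(t) = σ̃_p^+(t − d_ω) hold for all t. Define the delay-line storage S_τ(t) := (1/2)·∫_{t−d_u}^{t} ‖σ̃_o^+(s)‖² ds + (1/2)·∫_{t−d_ω}^{t} ‖σ̃_p^+(s)‖² ds. Then S_τ is differentiable and, for all t, S_τ'(t) = −⟨w̃(t), p̃(t)⟩ + ⟨ũ(t), ỹ(t)⟩. -/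
open Matrix intervalIntegral

lemma aux_hasDerivAt_integ {f : ℝ → ℝ} (hf : Continuous f) (d t : ℝ) :
    HasDerivAt (fun t => ∫ s in (t - d)..t, f s) (f t - f (t - d)) t := by
  have hG : ∀ x : ℝ, HasDerivAt (fun u => ∫ s in (0:ℝ)..u, f s) (f x) x := fun x =>
    intervalIntegral.integral_hasDerivAt_right (hf.intervalIntegrable _ _)
      (hf.stronglyMeasurableAtFilter MeasureTheory.volume _) hf.continuousAt
  have h1 := (hG t).sub (HasDerivAt.comp t (hG (t - d)) ((hasDerivAt_id t).sub_const d))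
  simp only [mul_one] at h1
  convert h1 using 1
  · rfl
  · rfl
  funext x
  have := intervalIntegral.integral_add_adjacent_intervals
    (hf.intervalIntegrable (μ := MeasureTheory.volume) 0 (x - d)) (hf.intervalIntegrable (x - d) x)
  simp only [Function.comp, id_eq, Pi.sub_apply]
  linarith

theorem stmt9 {ng : ℕ} (η du dω : ℝ) (hη : 0 < η) (hdu : 0 < du) (hdω : 0 < dω)
    (u y p w : ℝ → Fin ng → ℝ)
    (hu : Continuous u) (hy : Continuous y) (hp : Continuous p) (hw : Continuous w)
    (σpp σpm σop σom : ℝ → Fin ng → ℝ)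
    (h1 : σpp = fun t => (Real.sqrt (2 * η))⁻¹ • (p t - η • w t))
    (h2 : σpm = fun t => (Real.sqrt (2 * η))⁻¹ • (p t + η • w t))
    (h3 : σop = fun t => (Real.sqrt (2 * η))⁻¹ • (u t + η • y t))
    (h4 : σom = fun t => (Real.sqrt (2 * η))⁻¹ • (u t - η • y t))
    (hdel1 : ∀ t, σpm t = σop (t - du))
    (hdel2 : ∀ t, σom t = σpp (t - dω))
    (Sτ : ℝ → ℝ)
    (hSτ : Sτ = fun t => (1/2) * (∫ s in (t - du)..t, σop s ⬝ᵥ σop s) +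
                         (1/2) * (∫ s in (t - dω)..t, σpp s ⬝ᵥ σpp s)) :
    ∀ t, HasDerivAt Sτ (-(w t ⬝ᵥ p t) + u t ⬝ᵥ y t) t := by
  intro t
  have hσop : Continuous σop := by
    rw [h3]; exact (hu.add (hy.const_smul η)).const_smul (Real.sqrt (2 * η))⁻¹
  have hσpp : Continuous σpp := by
    rw [h1]; exact (hp.sub (hw.const_smul η)).const_smul (Real.sqrt (2 * η))⁻¹
  have hfop : Continuous fun s => σop s ⬝ᵥ σop s := by
    simp only [dotProduct]
    exact continuous_finset_sum _ fun i _ =>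
      ((continuous_apply i).comp hσop).mul ((continuous_apply i).comp hσop)
  have hfpp : Continuous fun s => σpp s ⬝ᵥ σpp s := by
    simp only [dotProduct]
    exact continuous_finset_sum _ fun i _ =>
      ((continuous_apply i).comp hσpp).mul ((continuous_apply i).comp hσpp)
  have hd1 := (aux_hasDerivAt_integ hfop du t).const_mul ((1:ℝ)/2)
  have hd2 := (aux_hasDerivAt_integ hfpp dω t).const_mul ((1:ℝ)/2)
  have hD := hd1.add hd2
  rw [hSτ]
  convert hD using 1
  · rfl
  · rfl
  · rfl
  rw [← hdel1 t, ← hdel2 t]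
  have hc : (Real.sqrt (2 * η))⁻¹ * (Real.sqrt (2 * η))⁻¹ = (2 * η)⁻¹ := by
    rw [← mul_inv, Real.mul_self_sqrt (by positivity)]
  subst h1 h2 h3 h4
  simp only [smul_dotProduct, dotProduct_smul, smul_eq_mul,
    sub_dotProduct, dotProduct_sub, add_dotProduct,
    dotProduct_add]
  rw [dotProduct_comm (w t) (p t), dotProduct_comm (y t) (u t)]
  field_simp
  ring_nf
  have h2s : Real.sqrt 2 ^ 2 = 2 := Real.sq_sqrt (by norm_num)
  have hηs : Real.sqrt η ^ 2 = η := Real.sq_sqrt hη.le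
  rw [Real.sq_sqrt (by positivity : (0:ℝ) ≤ η * 2)]; ring
end

section
/- Let G be a real n×n_g matrix, C a real n×m matrix, B a real diagonal m×m matrix, T a real n_t×m matrix, and L := C·B·Cᵀ. Let τ_u, τ_φ, τ_λ, τ_π, τ_+, τ_− be diagonal positive definite matrices of appropriate sizes, let κ > 0, let J : ℝ^{n_g} → ℝ be continuously differentiable, let Ω := {u : u_lo ≤ u ≤ u_hi} be a nonempty box in ℝ^{n_g}, and fix d ∈ ℝⁿ, P^sch ∈ ℝ^{n_t}, f_lo, f_hi ∈ ℝ^m. Let (u*, φ*, λ*, π*, ρ⁺*, ρ⁻*) satisfy: u* ∈ Ω; ρ⁺*, ρ⁻* ≥ 0 componentwise; G·u* − d − L·φ* = 0; T·B·Cᵀ·φ* = P^sch; −L·λ* + C·B·Tᵀ·π* + C·B·(ρ⁺* − ρ⁻*) = 0; ⟨−∇J(u*) − Gᵀ·λ*, z − u*⟩ ≤ 0 for all z ∈ Ω; ⟨B·Cᵀ·φ* − f_hi, s − ρ⁺*⟩ ≤ 0 and ⟨f_lo − B·Cᵀ·φ*, s − ρ⁻*⟩ ≤ 0 for all s ∈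 ℝ^m with s ≥ 0. Let u, φ, λ, π, ρ⁺, ρ⁻ be differentiable functions of t with u(t) ∈ Ω and ρ⁺(t), ρ⁻(t) ≥ 0 componentwise, and let y : ℝ → ℝ^{n_g} be continuous. Set r(t) := G·u(t) − d − L·φ(t) and ξ_u(t) := −∇J(u(t)) − Gᵀ·λ(t) − κ·Gᵀ·r(t) − y(t), and assume for all t: (a) ⟨u(t) − z, τ_u·u'(t)⟩ ≤ ⟨u(t) − z, ξ_u(t)⟩ for all z ∈ Ω; (b) τ_φ·φ'(t) = L·λ(t) − C·B·(Tᵀ·π(t) + ρ⁺(t) − ρ⁻(t)) + κ·L·r(t); (c) τ_λ·λ'(t) = r(t); (d) τ_π·π'(t) = T·B·Cᵀ·φ(t) − P^sch; (e) ⟨ρ⁺(t) − s, τ_+·(ρ⁺)'(t)⟩ ≤ ⟨ρ⁺(t) − s, B·Cᵀ·φ(t) − f_hi⟩ for all s ≥ 0, and ⟨ρ⁻(t) − s, τ_−·(ρ⁻)'(t)⟩ ≤ ⟨ρ⁻(t) − s, f_lo − B·Cᵀ·φ(t)⟩ for all s ≥ 0. Define the storage S_o(t) := (1/2)⟨u(t)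 − u*, τ_u·(u(t) − u*)⟩ + (1/2)⟨φ(t) − φ*, τ_φ·(φ(t) − φ*)⟩ + (1/2)⟨λ(t) − λ*, τ_λ·(λ(t) − λ*)⟩ + (1/2)⟨π(t) − π*, τ_π·(π(t) − π*)⟩ + (1/2)⟨ρ⁺(t) − ρ⁺*, τ_+·(ρ⁺(t) − ρ⁺*)⟩ + (1/2)⟨ρ⁻(t) − ρ⁻*, τ_−·(ρ⁻(t) − ρ⁻*)⟩. Then for all t, S_o'(t) ≤ −⟨u(t) − u*, ∇J(u(t)) − ∇J(u*)⟩ − κ·‖r(t)‖² − ⟨u(t) − u*, y(t)⟩. -/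
open Matrix

namespace Stmt10Aux

lemma dp_swap {a b : ℕ} (M : Matrix (Fin a) (Fin b) ℝ) (v : Fin a → ℝ) (w : Fin b → ℝ) :
    v ⬝ᵥ (M *ᵥ w) = (Mᵀ *ᵥ v) ⬝ᵥ w := by
  rw [Matrix.dotProduct_mulVec, Matrix.mulVec_transpose]

lemma swap1 {a b : ℕ} (M : Matrix (Fin a) (Fin b) ℝ) (v : Fin b → ℝ) (w : Fin a → ℝ) :
    v ⬝ᵥ (Mᵀ *ᵥ w) = w ⬝ᵥ (M *ᵥ v) := by
  rw [dp_swap, Matrix.transpose_transpose, dotProduct_comm]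

lemma swap2 {a b : ℕ} (M : Matrix (Fin a) (Fin b) ℝ) (v : Fin b → ℝ) (w : Fin a → ℝ) :
    (M *ᵥ v) ⬝ᵥ w = v ⬝ᵥ (Mᵀ *ᵥ w) := by
  rw [dp_swap, Matrix.transpose_transpose]

lemma swapSymm {a : ℕ} {M : Matrix (Fin a) (Fin a) ℝ} (hM : Mᵀ = M) (v w : Fin a → ℝ) :
    v ⬝ᵥ (M *ᵥ w) = w ⬝ᵥ (M *ᵥ v) := by
  nth_rewrite 1 [← hM]
  exact swap1 M v w

lemma swapBC {n m : ℕ} {B : Matrix (Fin m) (Fin m) ℝ} (hBs : Bᵀ = B)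
    (C : Matrix (Fin n) (Fin m) ℝ) (v : Fin n → ℝ) (p : Fin m → ℝ) :
    v ⬝ᵥ (C *ᵥ (B *ᵥ p)) = p ⬝ᵥ (B *ᵥ (Cᵀ *ᵥ v)) := by
  rw [dp_swap C, dp_swap B, hBs, dotProduct_comm]

lemma swapTBC {n m nt : ℕ} {B : Matrix (Fin m) (Fin m) ℝ} (hBs : Bᵀ = B)
    (C : Matrix (Fin n) (Fin m) ℝ) (T : Matrix (Fin nt) (Fin m) ℝ)
    (v : Fin n → ℝ) (p : Fin nt → ℝ) :
    v ⬝ᵥ (C *ᵥ (B *ᵥ (Tᵀ *ᵥ p))) = p ⬝ᵥ (T *ᵥ (B *ᵥ (Cᵀ *ᵥ v))) := by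
  rw [dp_swap C, dp_swap B, hBs]
  exact swap1 T _ p

lemma quadDeriv {k : ℕ} (dg : Fin k → ℝ) (xs : Fin k → ℝ) {x : ℝ → Fin k → ℝ}
    {x' : Fin k → ℝ} {t : ℝ} (hx : HasDerivAt x x' t) :
    HasDerivAt (fun s => (1/2) * ((x s - xs) ⬝ᵥ (Matrix.diagonal dg *ᵥ (x s - xs))))
      ((x t - xs) ⬝ᵥ (Matrix.diagonal dg *ᵥ x')) t := by
  have hcomp : ∀ i, HasDerivAt (fun s => x s i) (x' i) t := fun i => hasDerivAt_pi.mp hx i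
  have key : ∀ i : Fin k,
      HasDerivAt (fun s => (1/2) * ((x s i - xs i) * (dg i * (x s i - xs i))))
        ((x t i - xs i) * (dg i * x' i)) t := by
    intro i
    have h := (hcomp i).sub_const (xs i)
    have h2 := ((h.fun_mul (h.const_mul (dg i))).const_mul (1/2))
    refine h2.congr_deriv ?_
    ring
  have e1 : (fun s => (1/2) * ((x s - xs) ⬝ᵥ (Matrix.diagonal dg *ᵥ (x s - xs)))) =
      fun s => ∑ i, (1/2) * ((x s i - xs i) * (dg i * (x s i - xs i))) := by
    funext s
    simp [dotProduct, Matrix.mulVec_diagonal, Finset.mul_sum]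
  have e2 : (x t - xs) ⬝ᵥ (Matrix.diagonal dg *ᵥ x') = ∑ i, (x t i - xs i) * (dg i * x' i) := by
    simp [dotProduct, Matrix.mulVec_diagonal]
  rw [e1, e2]
  exact HasDerivAt.fun_sum (fun i _ => key i)

end Stmt10Aux

theorem stmt10 {n m ng nt : ℕ}
    (G : Matrix (Fin n) (Fin ng) ℝ) (C : Matrix (Fin n) (Fin m) ℝ)
    (B : Matrix (Fin m) (Fin m) ℝ) (hB : B.IsDiag)
    (T : Matrix (Fin nt) (Fin m) ℝ)
    (L : Matrix (Fin n) (Fin n) ℝ) (hL : L = C * B * Cᵀ)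
    -- diagonal positive definite gain matrices
    (dtu : Fin ng → ℝ) (dtφ dtl : Fin n → ℝ) (dtπ : Fin nt → ℝ) (dtp dtm : Fin m → ℝ)
    (hdtu : ∀ i, 0 < dtu i) (hdtφ : ∀ i, 0 < dtφ i) (hdtl : ∀ i, 0 < dtl i)
    (hdtπ : ∀ i, 0 < dtπ i) (hdtp : ∀ i, 0 < dtp i) (hdtm : ∀ i, 0 < dtm i)
    (τu : Matrix (Fin ng) (Fin ng) ℝ) (hτu : τu = Matrix.diagonal dtu)
    (τφ : Matrix (Fin n) (Fin n) ℝ) (hτφ : τφ = Matrix.diagonal dtφ)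
    (τl : Matrix (Fin n) (Fin n) ℝ) (hτl : τl = Matrix.diagonal dtl)
    (τπ : Matrix (Fin nt) (Fin nt) ℝ) (hτπ : τπ = Matrix.diagonal dtπ)
    (τp : Matrix (Fin m) (Fin m) ℝ) (hτp : τp = Matrix.diagonal dtp)
    (τm : Matrix (Fin m) (Fin m) ℝ) (hτm : τm = Matrix.diagonal dtm)
    (κ : ℝ) (hκ : 0 < κ)
    (J : (Fin ng → ℝ) → ℝ) (hJ : ContDiff ℝ 1 J)
    (gradJ : (Fin ng → ℝ) → (Fin ng → ℝ))
    (hgrad : ∀ a v : Fin ng → ℝ, fderiv ℝ J a v = gradJ a ⬝ᵥ v)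
    (ulo uhi : Fin ng → ℝ)
    (Ω : Set (Fin ng → ℝ)) (hΩ : Ω = {a | ulo ≤ a ∧ a ≤ uhi}) (hΩne : Ω.Nonempty)
    (d : Fin n → ℝ) (Psch : Fin nt → ℝ) (flo fhi : Fin m → ℝ)
    -- the starred equilibrium point
    (ustar : Fin ng → ℝ) (φstar lamstar : Fin n → ℝ) (pistar : Fin nt → ℝ)
    (rpstar rmstar : Fin m → ℝ)
    (hustar : ustar ∈ Ω) (hrpstar : 0 ≤ rpstar) (hrmstar : 0 ≤ rmstar)
    (heq1 : G *ᵥ ustar - d - L *ᵥ φstar = 0)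
    (heq2 : (T * B * Cᵀ) *ᵥ φstar = Psch)
    (heq3 : -(L *ᵥ lamstar) + (C * B * Tᵀ) *ᵥ pistar + (C * B) *ᵥ (rpstar - rmstar) = 0)
    (hnc1 : ∀ z ∈ Ω, (-(gradJ ustar) - Gᵀ *ᵥ lamstar) ⬝ᵥ (z - ustar) ≤ 0)
    (hnc2 : ∀ s : Fin m → ℝ, 0 ≤ s → ((B * Cᵀ) *ᵥ φstar - fhi) ⬝ᵥ (s - rpstar) ≤ 0)
    (hnc3 : ∀ s : Fin m → ℝ, 0 ≤ s → (flo - (B * Cᵀ) *ᵥ φstar) ⬝ᵥ (s - rmstar) ≤ 0)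
    -- trajectories and their derivatives
    (u u' : ℝ → Fin ng → ℝ) (φ φ' lam lam' : ℝ → Fin n → ℝ)
    (piv piv' : ℝ → Fin nt → ℝ) (rp rp' rm rm' : ℝ → Fin m → ℝ)
    (y : ℝ → Fin ng → ℝ) (hy : Continuous y)
    (hud : ∀ t, HasDerivAt u (u' t) t) (hφd : ∀ t, HasDerivAt φ (φ' t) t)
    (hld : ∀ t, HasDerivAt lam (lam' t) t) (hπd : ∀ t, HasDerivAt piv (piv' t) t)
    (hrpd : ∀ t, HasDerivAt rp (rp' t) t) (hrmd : ∀ t, HasDerivAt rm (rm' t) t)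
    (huΩ : ∀ t, u t ∈ Ω) (hrpnn : ∀ t, 0 ≤ rp t) (hrmnn : ∀ t, 0 ≤ rm t)
    -- residual and projected primal field
    (r : ℝ → Fin n → ℝ) (hr : r = fun t => G *ᵥ u t - d - L *ᵥ φ t)
    (ξu : ℝ → Fin ng → ℝ)
    (hξ : ξu = fun t => -(gradJ (u t)) - Gᵀ *ᵥ lam t - κ • (Gᵀ *ᵥ r t) - y t)
    -- (a)-(e): controller dynamics
    (ha : ∀ t, ∀ z ∈ Ω, (u t - z) ⬝ᵥ (τu *ᵥ u' t) ≤ (u t - z) ⬝ᵥ ξu t)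
    (hb : ∀ t, τφ *ᵥ φ' t =
        L *ᵥ lam t - (C * B) *ᵥ (Tᵀ *ᵥ piv t + rp t - rm t) + κ • (L *ᵥ r t))
    (hc : ∀ t, τl *ᵥ lam' t = r t)
    (hdπ : ∀ t, τπ *ᵥ piv' t = (T * B * Cᵀ) *ᵥ φ t - Psch)
    (he1 : ∀ t, ∀ s : Fin m → ℝ, 0 ≤ s →
        (rp t - s) ⬝ᵥ (τp *ᵥ rp' t) ≤ (rp t - s) ⬝ᵥ ((B * Cᵀ) *ᵥ φ t - fhi))
    (he2 : ∀ t, ∀ s : Fin m → ℝ, 0 ≤ s →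
        (rm t - s) ⬝ᵥ (τm *ᵥ rm' t) ≤ (rm t - s) ⬝ᵥ (flo - (B * Cᵀ) *ᵥ φ t))
    -- the storage function
    (So : ℝ → ℝ)
    (hSo : So = fun t =>
      (1/2) * ((u t - ustar) ⬝ᵥ (τu *ᵥ (u t - ustar))) +
      (1/2) * ((φ t - φstar) ⬝ᵥ (τφ *ᵥ (φ t - φstar))) +
      (1/2) * ((lam t - lamstar) ⬝ᵥ (τl *ᵥ (lam t - lamstar))) +
      (1/2) * ((piv t - pistar) ⬝ᵥ (τπ *ᵥ (piv t - pistar))) +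
      (1/2) * ((rp t - rpstar) ⬝ᵥ (τp *ᵥ (rp t - rpstar))) +
      (1/2) * ((rm t - rmstar) ⬝ᵥ (τm *ᵥ (rm t - rmstar)))) :
    ∀ t, ∃ s : ℝ, HasDerivAt So s t ∧
      s ≤ -((u t - ustar) ⬝ᵥ (gradJ (u t) - gradJ ustar)) - κ * (r t ⬝ᵥ r t)
          - (u t - ustar) ⬝ᵥ y t := by

  have hBs : Bᵀ = B := by
    ext i j
    by_cases h : i = j
    · subst h; rfl
    · rw [Matrix.transpose_apply, hB h, hB (Ne.symm h)]
  have hLs : Lᵀ = L := by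
    rw [hL, Matrix.transpose_mul, Matrix.transpose_mul, Matrix.transpose_transpose, hBs,
      Matrix.mul_assoc]
  subst hτu; subst hτφ; subst hτl; subst hτπ; subst hτp; subst hτm
  intro t
  refine ⟨(u t - ustar) ⬝ᵥ (Matrix.diagonal dtu *ᵥ u' t)
      + (φ t - φstar) ⬝ᵥ (Matrix.diagonal dtφ *ᵥ φ' t)
      + (lam t - lamstar) ⬝ᵥ (Matrix.diagonal dtl *ᵥ lam' t)
      + (piv t - pistar) ⬝ᵥ (Matrix.diagonal dtπ *ᵥ piv' t)
      + (rp t - rpstar) ⬝ᵥ (Matrix.diagonal dtp *ᵥ rp' t)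
      + (rm t - rmstar) ⬝ᵥ (Matrix.diagonal dtm *ᵥ rm' t), ?_, ?_⟩
  · rw [hSo]
    exact (((((Stmt10Aux.quadDeriv dtu ustar (hud t)).add
      (Stmt10Aux.quadDeriv dtφ φstar (hφd t))).add
      (Stmt10Aux.quadDeriv dtl lamstar (hld t))).add
      (Stmt10Aux.quadDeriv dtπ pistar (hπd t))).add
      (Stmt10Aux.quadDeriv dtp rpstar (hrpd t))).add
      (Stmt10Aux.quadDeriv dtm rmstar (hrmd t))
  · have V1 : r t = G *ᵥ (u t - ustar) - L *ᵥ (φ t - φstar) := by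
      rw [hr]
      show G *ᵥ u t - d - L *ᵥ φ t = _
      calc G *ᵥ u t - d - L *ᵥ φ t
          = (G *ᵥ u t - d - L *ᵥ φ t) - (G *ᵥ ustar - d - L *ᵥ φstar) := by
            rw [heq1, sub_zero]
        _ = G *ᵥ (u t - ustar) - L *ᵥ (φ t - φstar) := by
            rw [Matrix.mulVec_sub, Matrix.mulVec_sub]; abel
    have hK : r t ⬝ᵥ r t = u t ⬝ᵥ (Gᵀ *ᵥ r t) - ustar ⬝ᵥ (Gᵀ *ᵥ r t)
        - φ t ⬝ᵥ (L *ᵥ r t) + φstar ⬝ᵥ (L *ᵥ r t) := by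
      nth_rewrite 1 [V1]
      rw [sub_dotProduct, Matrix.mulVec_sub, Matrix.mulVec_sub,
        sub_dotProduct, sub_dotProduct,
        Stmt10Aux.swap2 G (u t) (r t), Stmt10Aux.swap2 G ustar (r t),
        Stmt10Aux.swap2 L (φ t) (r t), Stmt10Aux.swap2 L φstar (r t), hLs]
      ring
    have hKκ : κ * (r t ⬝ᵥ r t) = κ * (u t ⬝ᵥ (Gᵀ *ᵥ r t)) - κ * (ustar ⬝ᵥ (Gᵀ *ᵥ r t))
        - κ * (φ t ⬝ᵥ (L *ᵥ r t)) + κ * (φstar ⬝ᵥ (L *ᵥ r t)) := by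
      rw [hK]; ring
    have h1 := ha t ustar hustar
    have hnc1' := hnc1 (u t) (huΩ t)
    have hnc2' := hnc2 (rp t) (hrpnn t)
    have hnc3' := hnc3 (rm t) (hrmnn t)
    rw [dotProduct_comm] at hnc1' hnc2' hnc3'
    have h2 := congrArg (fun w => (φ t - φstar) ⬝ᵥ w) (hb t)
    have h3 := congrArg (fun w => (lam t - lamstar) ⬝ᵥ w) (hc t)
    have h4 := congrArg (fun w => (piv t - pistar) ⬝ᵥ w) (hdπ t)
    have h5 := he1 t rpstar hrpstar
    have h6 := he2 t rmstar hrmstar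
    have e2a := congrArg (fun w => piv t ⬝ᵥ w) heq2
    have e2b := congrArg (fun w => pistar ⬝ᵥ w) heq2
    have e3a := congrArg (fun w => φ t ⬝ᵥ w) heq3
    have e3b := congrArg (fun w => φstar ⬝ᵥ w) heq3
    have eVa := congrArg (fun w => lam t ⬝ᵥ w) V1
    have eVb := congrArg (fun w => lamstar ⬝ᵥ w) V1
    simp only [hξ, Matrix.mulVec_sub, Matrix.mulVec_add, sub_dotProduct,
      add_dotProduct, neg_dotProduct, dotProduct_sub,
      dotProduct_add, dotProduct_neg, dotProduct_smul,
      smul_eq_mul, ← Matrix.mulVec_mulVec, dotProduct_zero]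
      at h1 h2 h3 h4 h5 h6 hnc1' hnc2' hnc3' e2a e2b e3a e3b eVa eVb ⊢
    linarith [h1, h2, h3, h4, h5, h6, hnc1', hnc2', hnc3', e2a, e2b, e3a, e3b, eVa, eVb, hKκ,
      Stmt10Aux.swap1 G (u t) (lam t), Stmt10Aux.swap1 G (u t) lamstar,
      Stmt10Aux.swap1 G ustar (lam t), Stmt10Aux.swap1 G ustar lamstar,
      Stmt10Aux.swapSymm hLs (φ t) (lam t), Stmt10Aux.swapSymm hLs (φ t) lamstar,
      Stmt10Aux.swapSymm hLs φstar (lam t), Stmt10Aux.swapSymm hLs φstar lamstar,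
      Stmt10Aux.swapTBC hBs C T (φ t) (piv t), Stmt10Aux.swapTBC hBs C T (φ t) pistar,
      Stmt10Aux.swapTBC hBs C T φstar (piv t), Stmt10Aux.swapTBC hBs C T φstar pistar,
      Stmt10Aux.swapBC hBs C (φ t) (rp t), Stmt10Aux.swapBC hBs C (φ t) rpstar,
      Stmt10Aux.swapBC hBs C φstar (rp t), Stmt10Aux.swapBC hBs C φstar rpstar,
      Stmt10Aux.swapBC hBs C (φ t) (rm t), Stmt10Aux.swapBC hBs C (φ t) rmstar,
      Stmt10Aux.swapBC hBs C φstar (rm t), Stmt10Aux.swapBC hBs C φstar rmstar]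
end

section
/- Let (Ω, 𝓕, ℙ) be a probability space with a filtration (𝓕_k)_{k∈ℕ}, and let (V_k)_{k∈ℕ} and (γ_k)_{k∈ℕ} be sequences of nonnegative random variables such that, for each k, V_k and γ_k² are 𝓕_k-measurable and integrable. Let a₁, a₂, a₃, C_s > 0 and ε > 0 satisfy C_s·ε ≤ a₃/2 and a₃·ε/(2a₂) ≤ 1. Assume that almost surely, for all k: a₁·γ_k² ≤ V_k ≤ a₂·γ_k² and 𝔼[V_{k+1} | 𝓕_k] ≤ V_k − a₃·ε·γ_k² + C_s·ε²·γ_k². Then, with ν := a₃/(2a₂), for all k ∈ ℕ: 𝔼[γ_k²] ≤ (a₂/a₁)·(1 − ν·ε)^k·𝔼[γ_0²]. -/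
open MeasureTheory

theorem stmt14 {Ω : Type*} {mΩ : MeasurableSpace Ω} {μ : Measure Ω} [IsProbabilityMeasure μ]
    (ℱ : Filtration ℕ mΩ)
    (V γ : ℕ → Ω → ℝ)
    (hVnn : ∀ k ω, 0 ≤ V k ω) (hγnn : ∀ k ω, 0 ≤ γ k ω)
    (hVmeas : ∀ k, StronglyMeasurable[ℱ k] (V k))
    (hγmeas : ∀ k, StronglyMeasurable[ℱ k] (fun ω => (γ k ω) ^ 2))
    (hVint : ∀ k, Integrable (V k) μ)
    (hγint : ∀ k, Integrable (fun ω => (γ k ω) ^ 2) μ)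
    (a₁ a₂ a₃ Cs ε : ℝ) (ha₁ : 0 < a₁) (ha₂ : 0 < a₂) (ha₃ : 0 < a₃) (hCs : 0 < Cs)
    (hε : 0 < ε) (hstep : Cs * ε ≤ a₃ / 2) (hstep2 : a₃ * ε / (2 * a₂) ≤ 1)
    (hsandwich : ∀ᵐ ω ∂μ, ∀ k, a₁ * (γ k ω) ^ 2 ≤ V k ω ∧ V k ω ≤ a₂ * (γ k ω) ^ 2)
    (hdecrease : ∀ k, μ[V (k + 1) | ℱ k] ≤ᵐ[μ]
        fun ω => V k ω - a₃ * ε * (γ k ω) ^ 2 + Cs * ε ^ 2 * (γ k ω) ^ 2)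
    (ν : ℝ) (hν : ν = a₃ / (2 * a₂)) :
    ∀ k, ∫ ω, (γ k ω) ^ 2 ∂μ ≤ (a₂ / a₁) * (1 - ν * ε) ^ k * ∫ ω, (γ 0 ω) ^ 2 ∂μ := by
  have hνε : ν * ε ≤ 1 := by
    rw [hν]
    calc a₃ / (2 * a₂) * ε = a₃ * ε / (2 * a₂) := by ring
    _ ≤ 1 := hstep2
  have hνpos : 0 < ν := by rw [hν]; positivity
  have hfac : 0 ≤ 1 - ν * ε := by linarith
  -- key step inequality for integrals of V
  have key : ∀ k, ∫ ω, V (k + 1) ω ∂μ ≤ (1 - ν * ε) * ∫ ω, V k ω ∂μ := by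
    intro k
    have h1 : ∫ ω, V (k + 1) ω ∂μ = ∫ ω, (μ[V (k + 1) | ℱ k]) ω ∂μ := by
      rw [integral_condExp (ℱ.le k)]
    rw [h1]
    have hint1 : Integrable (μ[V (k + 1) | ℱ k]) μ := integrable_condExp
    have hint2 : Integrable (fun ω => (1 - ν * ε) * V k ω) μ := (hVint k).const_mul _
    have hle : (μ[V (k + 1) | ℱ k]) ≤ᵐ[μ] fun ω => (1 - ν * ε) * V k ω := by
      filter_upwards [hdecrease k, hsandwich] with ω h1 h2
      have hlow := (h2 k).1
      have hhigh := (h2 k).2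
      have hγ2 : 0 ≤ (γ k ω) ^ 2 := sq_nonneg _
      have : V k ω - a₃ * ε * (γ k ω) ^ 2 + Cs * ε ^ 2 * (γ k ω) ^ 2
          ≤ V k ω - (a₃ / 2) * ε * (γ k ω) ^ 2 := by
        nlinarith [mul_le_mul_of_nonneg_right hstep (mul_nonneg hε.le hγ2)]
      refine h1.trans (this.trans ?_)
      have hγV : V k ω / a₂ ≤ (γ k ω) ^ 2 := by
        rw [div_le_iff₀ ha₂]; linarith
      have hc : 0 ≤ (a₃ / 2) * ε := by positivity
      have := mul_le_mul_of_nonneg_left hγV hc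
      have hrw : (1 - ν * ε) * V k ω = V k ω - (a₃ / 2) * ε * (V k ω / a₂) := by
        rw [hν]; field_simp
      rw [hrw]; linarith
    calc ∫ ω, (μ[V (k + 1) | ℱ k]) ω ∂μ ≤ ∫ ω, (1 - ν * ε) * V k ω ∂μ :=
        integral_mono_ae hint1 hint2 hle
      _ = (1 - ν * ε) * ∫ ω, V k ω ∂μ := integral_const_mul _ _
  -- iterate
  have iter : ∀ k, ∫ ω, V k ω ∂μ ≤ (1 - ν * ε) ^ k * ∫ ω, V 0 ω ∂μ := by
    intro k
    induction k with
    | zero => simp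
    | succ n ih =>
      calc ∫ ω, V (n + 1) ω ∂μ ≤ (1 - ν * ε) * ∫ ω, V n ω ∂μ := key n
        _ ≤ (1 - ν * ε) * ((1 - ν * ε) ^ n * ∫ ω, V 0 ω ∂μ) :=
            mul_le_mul_of_nonneg_left ih hfac
        _ = (1 - ν * ε) ^ (n + 1) * ∫ ω, V 0 ω ∂μ := by ring
  intro k
  have hlowint : a₁ * ∫ ω, (γ k ω) ^ 2 ∂μ ≤ ∫ ω, V k ω ∂μ := by
    rw [← integral_const_mul]
    refine integral_mono_ae ((hγint k).const_mul _) (hVint k) ?_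
    filter_upwards [hsandwich] with ω h using (h k).1
  have hhighint : ∫ ω, V 0 ω ∂μ ≤ a₂ * ∫ ω, (γ 0 ω) ^ 2 ∂μ := by
    rw [← integral_const_mul]
    refine integral_mono_ae (hVint 0) ((hγint 0).const_mul _) ?_
    filter_upwards [hsandwich] with ω h using (h 0).2
  have hpow : 0 ≤ (1 - ν * ε) ^ k := pow_nonneg hfac k
  have : a₁ * ∫ ω, (γ k ω) ^ 2 ∂μ ≤ (1 - ν * ε) ^ k * (a₂ * ∫ ω, (γ 0 ω) ^ 2 ∂μ) :=
    (hlowint.trans (iter k)).trans (mul_le_mul_of_nonneg_left hhighint hpow)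
  rw [div_mul_eq_mul_div, div_mul_eq_mul_div, le_div_iff₀ ha₁]
  linarith
end

section
/- Let η > 0, ζ_u, ζ_ω > 0, and d_u, d_ω > 0. Let ũ, ỹ, p̃, w̃ : ℝ → ℝ^{n_g} be continuous with p̃ and w̃ such that the functions σ̃_p^−(t) := (p̃(t) + η·w̃(t))/√(2η) and σ̃_o^−(t) := (ũ(t) − η·ỹ(t))/√(2η) are differentiable, and define σ̃_p^+(t) := (p̃(t) − η·w̃(t))/√(2η) and σ̃_o^+(t) := (ũ(t) + η·ỹ(t))/√(2η). Define ã_u(t) := σ̃_o^+(t − d_u) and ã_ω(t) := σ̃_p^+(t − d_ω), and assume the filter dynamics ζ_u·(σ̃_p^−)'(t) = −σ̃_p^−(t) + ã_u(t) and ζ_ω·(σ̃_o^−)'(t) = −σ̃_o^−(t) + ã_ω(t) hold for all t. Define S_ch(t) := (1/2)·∫_{t−d_u}^{t} ‖σ̃_o^+(s)‖² ds + (1/2)·∫_{t−d_ω}^{t} ‖σ̃_p^+(s)‖² ds + (ζ_u/2)·‖σ̃_p^−(t)‖² + (ζ_ω/2)·‖σ̃_o^−(t)‖². Then S_ch is differentiable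 and, for all t, S_ch'(t) = −⟨w̃(t), p̃(t)⟩ + ⟨ũ(t), ỹ(t)⟩ − (1/2)·‖ã_u(t) − σ̃_p^−(t)‖² − (1/2)·‖ã_ω(t) − σ̃_o^−(t)‖². -/
open Matrix intervalIntegral

theorem stmt15 {ng : ℕ} (η ζu ζω du dω : ℝ)
    (hη : 0 < η) (hζu : 0 < ζu) (hζω : 0 < ζω) (hdu : 0 < du) (hdω : 0 < dω)
    (u y p w : ℝ → Fin ng → ℝ)
    (hu : Continuous u) (hy : Continuous y) (hp : Continuous p) (hw : Continuous w)
    (σpp σpm σop σom : ℝ → Fin ng → ℝ)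
    (h1 : σpp = fun t => (Real.sqrt (2 * η))⁻¹ • (p t - η • w t))
    (h2 : σpm = fun t => (Real.sqrt (2 * η))⁻¹ • (p t + η • w t))
    (h3 : σop = fun t => (Real.sqrt (2 * η))⁻¹ • (u t + η • y t))
    (h4 : σom = fun t => (Real.sqrt (2 * η))⁻¹ • (u t - η • y t))
    (σpm' σom' : ℝ → Fin ng → ℝ)
    (hσpm : ∀ t, HasDerivAt σpm (σpm' t) t)
    (hσom : ∀ t, HasDerivAt σom (σom' t) t)
    (au aω : ℝ → Fin ng → ℝ)
    (hau : au = fun t => σop (t - du)) (haω : aω = fun t => σpp (t - dω))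
    (hfil1 : ∀ t, ζu • σpm' t = -σpm t + au t)
    (hfil2 : ∀ t, ζω • σom' t = -σom t + aω t)
    (Sch : ℝ → ℝ)
    (hSch : Sch = fun t =>
      (1/2) * (∫ s in (t - du)..t, σop s ⬝ᵥ σop s) +
      (1/2) * (∫ s in (t - dω)..t, σpp s ⬝ᵥ σpp s) +
      (ζu / 2) * (σpm t ⬝ᵥ σpm t) + (ζω / 2) * (σom t ⬝ᵥ σom t)) :
    ∀ t, HasDerivAt Sch
      (-(w t ⬝ᵥ p t) + u t ⬝ᵥ y t
        - (1/2) * ((au t - σpm t) ⬝ᵥ (au t - σpm t))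
        - (1/2) * ((aω t - σom t) ⬝ᵥ (aω t - σom t))) t := by
  intro t
  subst h1 h2 h3 h4 hau haω hSch
  set c := (Real.sqrt (2 * η))⁻¹ with hc
  have h2η : (0:ℝ) < 2 * η := by linarith
  have hc2 : 2 * η * c ^ 2 = 1 := by
    rw [hc, ← Real.sq_sqrt h2η.le]
    field_simp
    rw [Real.sqrt_sq (Real.sqrt_nonneg _)]
  -- continuity helpers
  have hcop : Continuous (fun s => c • (u s + η • y s)) := by fun_prop
  have hcpp : Continuous (fun s => c • (p s - η • w s)) := by fun_prop
  have hg1 : Continuous (fun s => (c • (u s + η • y s)) ⬝ᵥ (c • (u s + η • y s))) := by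
    simp only [dotProduct]
    exact continuous_finset_sum _ fun i _ =>
      ((continuous_apply i).comp hcop).mul ((continuous_apply i).comp hcop)
  have hg2 : Continuous (fun s => (c • (p s - η • w s)) ⬝ᵥ (c • (p s - η • w s))) := by
    simp only [dotProduct]
    exact continuous_finset_sum _ fun i _ =>
      ((continuous_apply i).comp hcpp).mul ((continuous_apply i).comp hcpp)
  -- FTC helper
  have key : ∀ (g : ℝ → ℝ) (d : ℝ), Continuous g →
      HasDerivAt (fun τ => ∫ s in (τ - d)..τ, g s) (g t - g (t - d)) t := by
    intro g d hg
    have hF : ∀ x : ℝ, HasDerivAt (fun τ => ∫ s in (0:ℝ)..τ, g s) (g x) x :=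
      fun x => (hg.integral_hasStrictDerivAt 0 x).hasDerivAt
    have hsub : HasDerivAt (fun τ => ∫ s in (0:ℝ)..(τ - d), g s) (g (t - d)) t := by
      have := (hF (t - d)).comp t ((hasDerivAt_id t).sub_const d)
      simpa [Function.comp_def] using this
    have hdiff := (hF t).sub hsub
    have hfun : (fun τ => (∫ s in (0:ℝ)..τ, g s) - ∫ s in (0:ℝ)..(τ - d), g s)
        = fun τ => ∫ s in (τ - d)..τ, g s := by
      funext τ
      exact intervalIntegral.integral_interval_sub_left
        (hg.intervalIntegrable _ _) (hg.intervalIntegrable _ _)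
    rw [← hfun]; exact hdiff
  -- quadratic derivative helper
  have quad : ∀ (f f' : ℝ → Fin ng → ℝ), (∀ s, HasDerivAt f (f' s) s) →
      HasDerivAt (fun s => f s ⬝ᵥ f s) (2 * (f' t ⬝ᵥ f t)) t := by
    intro f f' hf
    have hcomp : ∀ i : Fin ng, HasDerivAt (fun s => f s i) (f' t i) t :=
      fun i => hasDerivAt_pi.mp (hf t) i
    have hsum : HasDerivAt (fun s => ∑ i, f s i * f s i)
        (∑ i, (f' t i * f t i + f t i * f' t i)) t :=
      HasDerivAt.fun_sum fun i _ => (hcomp i).mul (hcomp i)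
    have : (∑ i, (f' t i * f t i + f t i * f' t i)) = 2 * (f' t ⬝ᵥ f t) := by
      simp [dotProduct, Finset.sum_add_distrib, two_mul, mul_comm]
    rw [this] at hsum
    simpa [dotProduct] using hsum
  have H := ((((key _ du hg1).const_mul (1/2)).add ((key _ dω hg2).const_mul (1/2))).add
      ((quad _ _ hσpm).const_mul (ζu/2))).add ((quad _ _ hσom).const_mul (ζω/2))
  refine H.congr_deriv (Eq.symm ?_)
  have hpm' : ζu • σpm' t = -(c • (p t + η • w t)) + c • (u (t - du) + η • y (t - du)) :=
    hfil1 t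
  have hom' : ζω • σom' t = -(c • (u t - η • y t)) + c • (p (t - dω) - η • w (t - dω)) :=
    hfil2 t
  have hpm'' : σpm' t = ζu⁻¹ • (-(c • (p t + η • w t)) + c • (u (t - du) + η • y (t - du))) := by
    rw [← hpm', smul_smul, inv_mul_cancel₀ hζu.ne', one_smul]
  have hom'' : σom' t = ζω⁻¹ • (-(c • (u t - η • y t)) + c • (p (t - dω) - η • w (t - dω))) := by
    rw [← hom', smul_smul, inv_mul_cancel₀ hζω.ne', one_smul]
  rw [hpm'', hom'']
  simp only [dotProduct, Pi.add_apply, Pi.sub_apply, Pi.neg_apply, Pi.smul_apply, smul_eq_mul,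
    Finset.mul_sum, ← Finset.sum_add_distrib, ← Finset.sum_sub_distrib, neg_mul, ← Finset.sum_neg_distrib]
  refine Finset.sum_congr rfl fun i _ => ?_
  have hζu' : ζu ≠ 0 := hζu.ne'
  have hζω' : ζω ≠ 0 := hζω.ne'
  have hc2' : 2 * η * ((Real.sqrt (2 * η))⁻¹) ^ 2 = 1 := by rw [← hc]; exact hc2
  have hc2'' : 2 * η * ((Real.sqrt (η * 2))⁻¹) ^ 2 = 1 := by rw [mul_comm η 2]; exact hc2'
  field_simp
  ring_nf
  linear_combination (2 * (w t i * p t i - u t i * y t i)) * hc2'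
end
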